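/- arXiv:2308.03242 — 6 statements merged into one kernel-verified Lean document; each statement's English description precedes it below -/
import Mathlib

section
/- Let X, Z : (0,∞) → ℝⁿ solve the mirror-descent flow Ż(t) = −σ∇f(X(t)), X(t) = ∇φ*(Z(t)) with X(0) = x₀, Z(0) = z₀, ∇φ*(z₀) = x₀. Define the Lyapunov function E(t) = tσ[f(X(t)) − f(x*)] + D_{φ*}(Z(t), z*). Then for all t > 0, E'(t) ≤ −tσ‖Ẋ(t)‖². -/
open Set Filter Topology
open scoped RealInnerProductSpace

/-- The Fenchel conjugate of a function on Euclidean space. -/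
noncomputable def fenchelConj {n : ℕ} (φ : EuclideanSpace ℝ (Fin n) → ℝ)
    (z : EuclideanSpace ℝ (Fin n)) : ℝ :=
  ⨆ x : EuclideanSpace ℝ (Fin n), (⟪z, x⟫ - φ x)

section Aux

variable {n : ℕ}

local notation "E" => EuclideanSpace ℝ (Fin n)

lemma md_bddAbove (φ : E → ℝ) (σ : ℝ) (hσ : 0 < σ)
    (hφsc : ∀ x y, σ / 2 * ‖y - x‖ ^ 2 ≤ φ y - φ x - ⟪gradient φ x, y - x⟫) (z : E) :
    BddAbove (Set.range fun x : E => ⟪z, x⟫ - φ x) := by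
  refine ⟨‖z - gradient φ 0‖ ^ 2 / (2 * σ) - φ 0, ?_⟩
  rintro _ ⟨y, rfl⟩
  have h := hφsc 0 y
  simp only [sub_zero] at h
  have hc : ⟪z - gradient φ 0, y⟫ ≤ ‖z - gradient φ 0‖ * ‖y‖ := real_inner_le_norm _ _
  rw [inner_sub_left] at hc
  have key : ‖z - gradient φ 0‖ * ‖y‖ - σ / 2 * ‖y‖ ^ 2 ≤ ‖z - gradient φ 0‖ ^ 2 / (2 * σ) := by
    rw [le_div_iff₀ (by linarith)]
    nlinarith [sq_nonneg (σ * ‖y‖ - ‖z - gradient φ 0‖)]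
  show ⟪z, y⟫ - φ y ≤ _
  linarith

lemma md_conj_at_grad (φ : E → ℝ) (σ : ℝ) (hσ : 0 < σ)
    (hφsc : ∀ x y, σ / 2 * ‖y - x‖ ^ 2 ≤ φ y - φ x - ⟪gradient φ x, y - x⟫) (x : E) :
    fenchelConj φ (gradient φ x) = ⟪gradient φ x, x⟫ - φ x := by
  refine le_antisymm (ciSup_le fun y => ?_) (le_ciSup (md_bddAbove φ σ hσ hφsc _) x)
  have h := hφsc x y
  rw [inner_sub_right] at h
  have h0 : 0 ≤ σ / 2 * ‖y - x‖ ^ 2 := by positivity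
  linarith

lemma md_left_inv (φ : E → ℝ) (σ : ℝ) (hσ : 0 < σ)
    (hφsc : ∀ x y, σ / 2 * ‖y - x‖ ^ 2 ≤ φ y - φ x - ⟪gradient φ x, y - x⟫)
    (gφs : E → E) (hgφs : ∀ z, HasGradientAt (fenchelConj φ) (gφs z) z) (x : E) :
    gφs (gradient φ x) = x := by
  set w₀ := gradient φ x with hw₀
  set g : E → ℝ := fun w => fenchelConj φ w - ⟪x, w⟫ + φ x with hg
  have hmin : IsLocalMin g w₀ := by
    refine Filter.Eventually.of_forall fun w => ?_
    have h1 : g w₀ = 0 := by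
      simp only [hg, md_conj_at_grad φ σ hσ hφsc x, real_inner_comm x w₀]
      rw [hw₀, md_conj_at_grad φ σ hσ hφsc x, real_inner_comm x]
      ring
    have h2 : 0 ≤ g w := by
      simp only [hg]
      have h4 : ⟪w, x⟫ = ⟪x, w⟫ := real_inner_comm _ _
      have h3 : (⟪w, x⟫ - φ x) ≤ fenchelConj φ w := le_ciSup (md_bddAbove φ σ hσ hφsc w) x
      linarith
    rw [h1]; exact h2
  have hF : HasFDerivAt g (InnerProductSpace.toDual ℝ _ (gφs w₀) - innerSL ℝ x) w₀ := by
    exact ((hasGradientAt_iff_hasFDerivAt.mp (hgφs w₀)).sub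
      ((innerSL ℝ x).hasFDerivAt)).add_const (φ x)
  have h0 := hmin.hasFDerivAt_eq_zero hF
  have h1 := DFunLike.congr_fun h0 (gφs w₀ - x)
  simp only [ContinuousLinearMap.sub_apply, InnerProductSpace.toDual_apply_apply, innerSL_apply_apply,
    ContinuousLinearMap.zero_apply] at h1
  have h2 : ⟪gφs w₀ - x, gφs w₀ - x⟫ = 0 := by
    rw [inner_sub_left]; linarith [h1]
  have := inner_self_eq_zero.mp h2
  rwa [sub_eq_zero] at this

lemma md_grad_surj (φ : E → ℝ) (σ : ℝ) (hσ : 0 < σ) (hφC2 : ContDiff ℝ 2 φ)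
    (hφsc : ∀ x y, σ / 2 * ‖y - x‖ ^ 2 ≤ φ y - φ x - ⟪gradient φ x, y - x⟫) (z : E) :
    ∃ x : E, gradient φ x = z := by
  set ψ : E → ℝ := fun y => φ y - ⟪z, y⟫ with hψ
  have hφdiff : Differentiable ℝ φ := hφC2.differentiable (by norm_num)
  have hcont : Continuous ψ := hφdiff.continuous.sub (continuous_const.inner continuous_id)
  set c : ℝ := ‖gradient φ 0 - z‖ with hc
  have hlow : ∀ y : E, σ / 2 * ‖y‖ ^ 2 - c * ‖y‖ + φ 0 ≤ ψ y := by
    intro y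
    have h := hφsc 0 y
    simp only [sub_zero] at h
    have hc2 : ⟪z - gradient φ 0, y⟫ ≤ c * ‖y‖ := by
      rw [hc, norm_sub_rev]; exact real_inner_le_norm _ _
    rw [inner_sub_left] at hc2
    simp only [hψ]
    linarith
  have htend : Tendsto ψ (cocompact E) atTop := by
    have h1 : Tendsto (fun r : ℝ => σ / 2 * r ^ 2 - c * r + φ 0) atTop atTop := by
      have h2 : Tendsto (fun r : ℝ => r * (σ / 2 * r - c) + φ 0) atTop atTop := by
        refine tendsto_atTop_add_const_right _ _ ?_
        refine tendsto_id.atTop_mul_atTop₀ ?_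
        exact tendsto_atTop_add_const_right _ _ (tendsto_id.const_mul_atTop (by positivity))
      refine h2.congr fun r => by ring
    have h3 : Tendsto (fun y : E => σ / 2 * ‖y‖ ^ 2 - c * ‖y‖ + φ 0) (cocompact E) atTop :=
      h1.comp tendsto_norm_cocompact_atTop
    exact tendsto_atTop_mono hlow h3
  obtain ⟨x₀, hx₀⟩ := hcont.exists_forall_le' 0 (htend.eventually_ge_atTop (ψ 0))
  have hmin : IsLocalMin ψ x₀ := Filter.Eventually.of_forall hx₀
  have hF : HasFDerivAt ψ (InnerProductSpace.toDual ℝ _ (gradient φ x₀) - innerSL ℝ z) x₀ :=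
    (hasGradientAt_iff_hasFDerivAt.mp (hφdiff x₀).hasGradientAt).sub
      (innerSL ℝ z).hasFDerivAt
  have h0 := hmin.hasFDerivAt_eq_zero hF
  refine ⟨x₀, ?_⟩
  have h1 := DFunLike.congr_fun h0 (gradient φ x₀ - z)
  simp only [ContinuousLinearMap.sub_apply, InnerProductSpace.toDual_apply_apply, innerSL_apply_apply,
    ContinuousLinearMap.zero_apply] at h1
  have h2 : ⟪gradient φ x₀ - z, gradient φ x₀ - z⟫ = 0 := by
    rw [inner_sub_left]; linarith [h1]
  have := inner_self_eq_zero.mp h2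
  rwa [sub_eq_zero] at this

lemma md_right_inv (φ : E → ℝ) (σ : ℝ) (hσ : 0 < σ) (hφC2 : ContDiff ℝ 2 φ)
    (hφsc : ∀ x y, σ / 2 * ‖y - x‖ ^ 2 ≤ φ y - φ x - ⟪gradient φ x, y - x⟫)
    (gφs : E → E) (hgφs : ∀ z, HasGradientAt (fenchelConj φ) (gφs z) z) (z : E) :
    gradient φ (gφs z) = z := by
  obtain ⟨x, hx⟩ := md_grad_surj φ σ hσ hφC2 hφsc z
  rw [← hx, md_left_inv φ σ hσ hφsc gφs hgφs x]

lemma md_coco (φ : E → ℝ) (σ : ℝ) (gφs : E → E)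
    (hφsc : ∀ x y, σ / 2 * ‖y - x‖ ^ 2 ≤ φ y - φ x - ⟪gradient φ x, y - x⟫)
    (hinv : ∀ z, gradient φ (gφs z) = z) (z w : E) :
    σ * ‖gφs z - gφs w‖ ^ 2 ≤ ⟪gφs z - gφs w, z - w⟫ := by
  have h1 := hφsc (gφs w) (gφs z)
  have h2 := hφsc (gφs z) (gφs w)
  rw [hinv w] at h1
  rw [hinv z] at h2
  have e1 : ⟪w, gφs z - gφs w⟫ = ⟪gφs z - gφs w, w⟫ := real_inner_comm _ _
  have e2 : ⟪z, gφs w - gφs z⟫ = -⟪gφs z - gφs w, z⟫ := by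
    rw [real_inner_comm, show gφs w - gφs z = -(gφs z - gφs w) by abel, inner_neg_left]
  have e3 : ‖gφs w - gφs z‖ = ‖gφs z - gφs w‖ := norm_sub_rev _ _
  rw [inner_sub_right]
  rw [e1] at h1
  rw [e2, e3] at h2
  linarith

lemma md_convex_grad (f : E → ℝ) (f' : E → E) (hconv : ConvexOn ℝ Set.univ f)
    (hfd : ∀ x, HasGradientAt f (f' x) x) (x y : E) :
    f x + ⟪f' x, y - x⟫ ≤ f y := by
  set c : ℝ → E := fun s => x + s • (y - x) with hcdef
  have hc : HasDerivAt c (y - x) 0 := by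
    have := ((hasDerivAt_id (0 : ℝ)).smul_const (y - x)).const_add x
    simpa [hcdef] using this
  have hc0 : c 0 = x := by simp [hcdef]
  have hg : HasDerivAt (fun s => f (c s)) ⟪f' x, y - x⟫ 0 := by
    have h1 := (hasGradientAt_iff_hasFDerivAt.mp (hfd x))
    have h1' : HasFDerivAt f (InnerProductSpace.toDual ℝ _ (f' x)) (c 0) := hc0.symm ▸ h1
    have h2 := h1'.comp_hasDerivAt 0 hc
    rw [show ⟪f' x, y - x⟫ = (InnerProductSpace.toDual ℝ _ (f' x)) (y - x) from
      (InnerProductSpace.toDual_apply_apply).symm]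
    exact h2
  have hslope : ∀ s ∈ Ioc (0 : ℝ) 1, slope (fun s => f (c s)) 0 s ≤ f y - f x := by
    intro s hs
    have hcs : c s = (1 - s) • x + s • y := by
      simp only [hcdef]; module
    have hcv := hconv.2 (mem_univ x) (mem_univ y) (by linarith [hs.2] : (0:ℝ) ≤ 1 - s)
      hs.1.le (by ring)
    rw [← hcs] at hcv
    simp only [smul_eq_mul] at hcv
    rw [slope_def_field, hc0, sub_zero, div_le_iff₀ hs.1]
    nlinarith [hcv]
  have htends : Tendsto (slope (fun s => f (c s)) 0) (𝓝[>] (0:ℝ)) (𝓝 ⟪f' x, y - x⟫) :=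
    (hasDerivAt_iff_tendsto_slope.mp hg).mono_left
      (nhdsWithin_mono 0 fun s hs => ne_of_gt hs)
  have hle : ⟪f' x, y - x⟫ ≤ f y - f x :=
    le_of_tendsto htends (Filter.eventually_of_mem
      (Ioc_mem_nhdsGT_of_mem ⟨le_refl (0:ℝ), by norm_num⟩) hslope)
  linarith

end Aux

/-- Theorem 1: along the mirror-descent flow `Ż = -σ∇f(X)`, `X = ∇φ*(Z)`, the Lyapunov
function `E(t) = tσ[f(X(t)) − f(x*)] + D_{φ*}(Z(t), z*)` satisfies
`E'(t) ≤ −tσ‖Ẋ(t)‖²` for all `t > 0`. -/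
theorem mirror_flow_lyapunov_deriv
    {n : ℕ} (f φ : EuclideanSpace ℝ (Fin n) → ℝ)
    (f' gφs : EuclideanSpace ℝ (Fin n) → EuclideanSpace ℝ (Fin n))
    (σ L : ℝ) (hσ : 0 < σ)
    -- f is convex and differentiable with L-Lipschitz gradient
    (hfconv : ConvexOn ℝ Set.univ f)
    (hfd : ∀ x, HasGradientAt f (f' x) x)
    (hfL : ∀ x y, ‖f' x - f' y‖ ≤ L * ‖x - y‖)
    -- φ is twice continuously differentiable and σ-strongly convex
    (hφC2 : ContDiff ℝ 2 φ)
    (hφsc : ∀ x y, σ / 2 * ‖y - x‖ ^ 2 ≤ φ y - φ x - ⟪gradient φ x, y - x⟫)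
    -- φ* is differentiable with gradient gφs
    (hgφs : ∀ z, HasGradientAt (fenchelConj φ) (gφs z) z)
    -- the solution of the mirror-descent flow
    (X Z X' Z' : ℝ → EuclideanSpace ℝ (Fin n))
    (x₀ z₀ xs zs : EuclideanSpace ℝ (Fin n))
    (hX : ∀ t, 0 < t → HasDerivAt X (X' t) t)
    (hZ : ∀ t, 0 < t → HasDerivAt Z (Z' t) t)
    (hflow₁ : ∀ t, 0 < t → Z' t = -σ • f' (X t))
    (hflow₂ : ∀ t, 0 < t → X t = gφs (Z t))
    (hX0 : X 0 = x₀) (hZ0 : Z 0 = z₀) (hx₀ : gφs z₀ = x₀)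
    -- x* is a global minimizer of f and ∇φ*(z*) = x*
    (hxs : ∀ x, f xs ≤ f x) (hzs : gφs zs = xs) :
    ∀ t, 0 < t →
      deriv (fun u => u * σ * (f (X u) - f xs) +
          (fenchelConj φ (Z u) - fenchelConj φ zs - ⟪gφs zs, Z u - zs⟫)) t
        ≤ -(t * σ) * ‖X' t‖ ^ 2 := by
  intro t ht
  have hinv : ∀ z, gradient φ (gφs z) = z :=
    md_right_inv φ σ hσ hφC2 hφsc gφs hgφs
  have coco := md_coco φ σ gφs hφsc hinv
  -- key inequality from cocoercivity in the limit
  have hkey : σ * ‖X' t‖ ^ 2 ≤ ⟪X' t, Z' t⟫ := by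
    have hXs := hasDerivAt_iff_tendsto_slope.mp (hX t ht)
    have hZs := hasDerivAt_iff_tendsto_slope.mp (hZ t ht)
    have htend : Tendsto (fun s => ⟪slope X t s, slope Z t s⟫ - σ * ‖slope X t s‖ ^ 2)
        (𝓝[≠] t) (𝓝 (⟪X' t, Z' t⟫ - σ * ‖X' t‖ ^ 2)) :=
      (hXs.inner hZs).sub ((hXs.norm.pow 2).const_mul σ)
    have hev : ∀ᶠ s in 𝓝[≠] t, 0 ≤ ⟪slope X t s, slope Z t s⟫ - σ * ‖slope X t s‖ ^ 2 := by
      have hpos : ∀ᶠ s in 𝓝[≠] t, 0 < s :=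
        eventually_nhdsWithin_of_eventually_nhds (eventually_gt_nhds ht)
      filter_upwards [hpos] with s hs
      have hco := coco (Z s) (Z t)
      rw [← hflow₂ s hs, ← hflow₂ t ht] at hco
      have hXeq : slope X t s = (s - t)⁻¹ • (X s - X t) := rfl
      have hZeq : slope Z t s = (s - t)⁻¹ • (Z s - Z t) := rfl
      rw [hXeq, hZeq, real_inner_smul_left, real_inner_smul_right, norm_smul,
        mul_pow, Real.norm_eq_abs, sq_abs]
      have hk : (0:ℝ) ≤ ((s - t)⁻¹) ^ 2 := sq_nonneg _
      have hm := mul_le_mul_of_nonneg_left hco hk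
      nlinarith [hm]
    have h0 : 0 ≤ ⟪X' t, Z' t⟫ - σ * ‖X' t‖ ^ 2 := ge_of_tendsto htend hev
    linarith
  have hc2 : ⟪f' (X t), X' t⟫ ≤ -‖X' t‖ ^ 2 := by
    rw [hflow₁ t ht, real_inner_smul_right] at hkey
    have hcomm : ⟪X' t, f' (X t)⟫ = ⟪f' (X t), X' t⟫ := real_inner_comm _ _
    nlinarith [hkey]
  have hc1 : f (X t) - f xs ≤ ⟪f' (X t), X t - xs⟫ := by
    have h := md_convex_grad f f' hfconv hfd (X t) xs
    have e : ⟪f' (X t), xs - X t⟫ = -⟪f' (X t), X t - xs⟫ := by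
      rw [show xs - X t = -(X t - xs) by abel, inner_neg_right]
    linarith [h, e.le, e.ge]
  -- derivative computation
  have hfX : HasDerivAt (fun u => f (X u)) ⟪f' (X t), X' t⟫ t := by
    have h1 := hasGradientAt_iff_hasFDerivAt.mp (hfd (X t))
    have h2 := h1.comp_hasDerivAt t (hX t ht)
    rw [show ⟪f' (X t), X' t⟫ = (InnerProductSpace.toDual ℝ _ (f' (X t))) (X' t) from
      (InnerProductSpace.toDual_apply_apply).symm]
    exact h2
  have hφZ : HasDerivAt (fun u => fenchelConj φ (Z u)) ⟪gφs (Z t), Z' t⟫ t := by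
    have h1 := hasGradientAt_iff_hasFDerivAt.mp (hgφs (Z t))
    have h2 := h1.comp_hasDerivAt t (hZ t ht)
    rw [show ⟪gφs (Z t), Z' t⟫ = (InnerProductSpace.toDual ℝ _ (gφs (Z t))) (Z' t) from
      (InnerProductSpace.toDual_apply_apply).symm]
    exact h2
  have h3 : HasDerivAt (fun u => ⟪gφs zs, Z u - zs⟫) ⟪gφs zs, Z' t⟫ t := by
    have h := (hasDerivAt_const t (gφs zs)).inner ℝ ((hZ t ht).sub_const zs)
    rw [show (⟪gφs zs, Z' t⟫ : ℝ) = ⟪gφs zs, Z' t⟫ + ⟪(0 : EuclideanSpace ℝ (Fin n)), Z t - zs⟫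
      from by rw [inner_zero_left, add_zero]]
    exact h
  have h1 : HasDerivAt (fun u => u * σ * (f (X u) - f xs))
      (1 * σ * (f (X t) - f xs) + t * σ * ⟪f' (X t), X' t⟫) t := by
    have := ((hasDerivAt_id t).mul_const σ).mul (hfX.sub_const (f xs))
    simpa [Pi.mul_def] using this
  have hE := h1.add ((hφZ.sub_const (fenchelConj φ zs)).sub h3)
  rw [HasDerivAt.deriv (f := fun u => u * σ * (f (X u) - f xs) +
    (fenchelConj φ (Z u) - fenchelConj φ zs - ⟪gφs zs, Z u - zs⟫)) hE]
  have e : ⟪gφs (Z t), Z' t⟫ - ⟪gφs zs, Z' t⟫ = -σ * ⟪f' (X t), X t - xs⟫ := by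
    rw [← hflow₂ t ht, hzs, ← inner_sub_left, hflow₁ t ht, real_inner_smul_right,
      real_inner_comm]
  rw [e]
  have p1 := mul_le_mul_of_nonneg_left hc1 hσ.le
  have p2 := mul_le_mul_of_nonneg_left hc2 (mul_nonneg ht.le hσ.le)
  linarith [p1, p2]
end

section
/- Let X, Z : (0,∞) → ℝⁿ solve the mirror-descent flow Ż(t) = −σ∇f(X(t)), X(t) = ∇φ*(Z(t)) with X(0) = x₀, Z(0) = z₀, ∇φ*(z₀) = x₀. Then inf_{0 ≤ u ≤ t} ‖Ẋ(u)‖² = o(1/t²) as t → ∞; that is, t² · inf_{0 ≤ u ≤ t} ‖Ẋ(u)‖² → 0 as t → ∞. -/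
open Set Filter Topology
open scoped RealInnerProductSpace

section Aux
variable {n : ℕ}
local notation "E" => EuclideanSpace ℝ (Fin n)

lemma aux_bdd (φ : E → ℝ) (σ : ℝ) (hσ : 0 < σ)
    (hφsc : ∀ x y : E, σ / 2 * ‖y - x‖ ^ 2 ≤ φ y - φ x - ⟪gradient φ x, y - x⟫)
    (z x : E) : ⟪z, x⟫ - φ x ≤ ‖z - gradient φ 0‖ ^ 2 / (2 * σ) - φ 0 := by
  have h := hφsc 0 x
  simp only [sub_zero] at h
  have h2 : ⟪z - gradient φ 0, x⟫ ≤ ‖z - gradient φ 0‖ * ‖x‖ := real_inner_le_norm _ _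
  have h3 : ⟪z, x⟫ = ⟪z - gradient φ 0, x⟫ + ⟪gradient φ 0, x⟫ := by
    rw [inner_sub_left]; ring
  set c := ‖z - gradient φ 0‖ with hc
  have key : σ * (c * ‖x‖ - σ / 2 * ‖x‖ ^ 2) ≤ c ^ 2 / 2 := by
    nlinarith [sq_nonneg (σ * ‖x‖ - c)]
  have key2 : c * ‖x‖ - σ / 2 * ‖x‖ ^ 2 ≤ c ^ 2 / (2 * σ) := by
    rw [le_div_iff₀ (by positivity : (0:ℝ) < 2 * σ)]; nlinarith
  have h2' : ⟪z - gradient φ 0, x⟫ ≤ c * ‖x‖ := h2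
  linarith

lemma aux_max (φ : E → ℝ) (σ : ℝ) (hσ : 0 < σ)
    (hφsc : ∀ x y : E, σ / 2 * ‖y - x‖ ^ 2 ≤ φ y - φ x - ⟪gradient φ x, y - x⟫)
    (hφc : Continuous φ) (z : E) :
    ∃ xb : E, ∀ x : E, ⟪z, x⟫ - φ x ≤ ⟪z, xb⟫ - φ xb := by
  set c := ‖z - gradient φ 0‖ with hc
  set R := 2 * c / σ + 1 with hR
  have hcnn : 0 ≤ c := norm_nonneg _
  have hRpos : 0 < R := by positivity
  have hcont : Continuous fun x : E => ⟪z, x⟫ - φ x :=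
    (continuous_const.inner continuous_id).sub hφc
  obtain ⟨xb, hxbm, hmax⟩ := (isCompact_closedBall (0 : E) R).exists_isMaxOn
    ⟨0, by simp [hRpos.le]⟩ hcont.continuousOn
  refine ⟨xb, fun x => ?_⟩
  by_cases hx : x ∈ Metric.closedBall (0 : E) R
  · exact hmax hx
  · have hxn : R < ‖x‖ := by simpa [Metric.mem_closedBall, dist_eq_norm] using hx
    have h := hφsc 0 x
    simp only [sub_zero] at h
    have h2 : ⟪z - gradient φ 0, x⟫ ≤ c * ‖x‖ := real_inner_le_norm _ _
    have h3 : ⟪z, x⟫ = ⟪z - gradient φ 0, x⟫ + ⟪gradient φ 0, x⟫ := by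
      rw [inner_sub_left]; ring
    have h0 : (0:ℝ) ≤ R := hRpos.le
    have hmax0 : ⟪z, (0:E)⟫ - φ 0 ≤ ⟪z, xb⟫ - φ xb := hmax (by simp [hRpos.le])
    have hz0 : ⟪z, (0:E)⟫ = 0 := by simp
    have h6 : 2 * c / σ < ‖x‖ := by rw [hR] at hxn; linarith
    have h7 : 2 * c < ‖x‖ * σ := (div_lt_iff₀ hσ).mp h6
    have h4 : c < σ / 2 * ‖x‖ := by nlinarith
    have h5 : 0 < ‖x‖ * (σ / 2 * ‖x‖ - c) := by
      apply mul_pos (lt_trans hRpos hxn); linarith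
    nlinarith

lemma aux_line (F : E → ℝ) (g z q : E) (hF : HasGradientAt F g z) :
    HasDerivAt (fun s : ℝ => F (z + s • q)) ⟪g, q⟫ 0 := by
  have hline : HasDerivAt (fun s : ℝ => z + s • q) q 0 := by
    simpa using ((hasDerivAt_id (0 : ℝ)).smul_const q).const_add z
  have h0 : z + (0 : ℝ) • q = z := by simp
  have hF' : HasFDerivAt F (InnerProductSpace.toDual ℝ _ g) (z + (0 : ℝ) • q) :=
    h0.symm ▸ hF.hasFDerivAt
  have := hF'.comp_hasDerivAt 0 hline
  simpa [InnerProductSpace.toDual_apply_apply, Function.comp_def] using this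

lemma aux_subgrad {F : E → ℝ} {z g p : E} (hF : HasGradientAt F g z)
    (hp : ∀ w, F z + ⟪p, w - z⟫ ≤ F w) : p = g := by
  set q := p - g with hq
  have hψ := aux_line F g z q hF
  have ht : Tendsto (slope (fun s : ℝ => F (z + s • q)) 0) (𝓝[>] 0) (𝓝 ⟪g, q⟫) :=
    (hasDerivAt_iff_tendsto_slope.1 hψ).mono_left
      (nhdsWithin_mono _ fun s hs => ne_of_gt hs)
  have key : ⟪p, q⟫ ≤ ⟪g, q⟫ := by
    refine ge_of_tendsto ht ?_
    filter_upwards [self_mem_nhdsWithin] with s hs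
    have h1 := hp (z + s • q)
    rw [add_sub_cancel_left, real_inner_smul_right] at h1
    have hs' : (0 : ℝ) < s := hs
    rw [slope_def_field]
    simp only [sub_zero, zero_smul, add_zero]
    rw [le_div_iff₀ hs']
    nlinarith
  have h2 : ⟪q, q⟫ ≤ (0 : ℝ) := by
    have : ⟪p - g, q⟫ ≤ 0 := by rw [inner_sub_left]; linarith
    rwa [← hq] at this
  have h3 : q = 0 := inner_self_eq_zero.1 (le_antisymm h2 real_inner_self_nonneg)
  exact sub_eq_zero.1 (hq ▸ h3)

lemma aux_convex_grad {f : E → ℝ} {p x : E} (hf : ConvexOn ℝ univ f)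
    (hfd : HasGradientAt f p x) (y : E) : f x + ⟪p, y - x⟫ ≤ f y := by
  set v := y - x with hv
  have hψ := aux_line f p x v hfd
  have ht : Tendsto (slope (fun s : ℝ => f (x + s • v)) 0) (𝓝[>] 0) (𝓝 ⟪p, v⟫) :=
    (hasDerivAt_iff_tendsto_slope.1 hψ).mono_left
      (nhdsWithin_mono _ fun s hs => ne_of_gt hs)
  have key : ⟪p, v⟫ ≤ f y - f x := by
    refine le_of_tendsto ht ?_
    filter_upwards [Ioo_mem_nhdsGT_of_mem (by constructor <;> norm_num :
      (0:ℝ) ∈ Ico 0 1)] with s hs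
    obtain ⟨hs0, hs1⟩ := hs
    have hcvx := hf.2 (mem_univ x) (mem_univ y) (by linarith : (0:ℝ) ≤ 1 - s)
      hs0.le (by ring : (1 - s) + s = 1)
    have hpt : (1 - s) • x + s • y = x + s • v := by
      rw [hv]; module
    rw [hpt] at hcvx
    rw [slope_def_field]
    simp only [sub_zero, zero_smul, add_zero]
    rw [div_le_iff₀ hs0]
    have : f (x + s • v) ≤ (1 - s) * f x + s * f y := by
      simpa [smul_eq_mul] using hcvx
    nlinarith
  linarith

end Aux

lemma aux_decay {F F' : ℝ → ℝ} {a b : ℝ} (ha : 0 < a) (hab : a ≤ b)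
    (hF : ∀ u, 0 < u → HasDerivAt F (F' u) u)
    (h0 : ∀ u, a < u → u < b → F' u ≤ 0) : F b ≤ F a := by
  have hanti : AntitoneOn F (Icc a b) := by
    apply antitoneOn_of_deriv_nonpos (convex_Icc a b)
    · exact fun u hu => (hF u (lt_of_lt_of_le ha hu.1)).continuousAt.continuousWithinAt
    · intro u hu
      rw [interior_Icc] at hu
      exact ((hF u (ha.trans hu.1)).differentiableAt).differentiableWithinAt
    · intro u hu
      rw [interior_Icc] at hu
      rw [(hF u (ha.trans hu.1)).deriv]
      exact h0 u hu.1 hu.2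
  exact hanti ⟨le_refl a, hab⟩ ⟨hab, le_refl b⟩ hab

set_option maxHeartbeats 1000000 in
/-- Along the mirror-descent flow, `inf_{0 ≤ u ≤ t} ‖Ẋ(u)‖² = o(1/t²)` as `t → ∞`. -/
theorem mirror_flow_velocity_rate
{n : ℕ} (f φ : EuclideanSpace ℝ (Fin n) → ℝ)
    (f' gφs : EuclideanSpace ℝ (Fin n) → EuclideanSpace ℝ (Fin n))
    (σ L : ℝ) (hσ : 0 < σ)
    -- f is convex and differentiable with L-Lipschitz gradient
    (hfconv : ConvexOn ℝ Set.univ f)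
    (hfd : ∀ x, HasGradientAt f (f' x) x)
    (hfL : ∀ x y, ‖f' x - f' y‖ ≤ L * ‖x - y‖)
    -- φ is twice continuously differentiable and σ-strongly convex
    (hφC2 : ContDiff ℝ 2 φ)
    (hφsc : ∀ x y, σ / 2 * ‖y - x‖ ^ 2 ≤ φ y - φ x - ⟪gradient φ x, y - x⟫)
    -- φ* is differentiable with gradient gφs
    (hgφs : ∀ z, HasGradientAt (fenchelConj φ) (gφs z) z)
    -- the solution of the mirror-descent flow
    (X Z X' Z' : ℝ → EuclideanSpace ℝ (Fin n))
    (x₀ z₀ xs zs : EuclideanSpace ℝ (Fin n))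
    (hX : ∀ t, 0 < t → HasDerivAt X (X' t) t)
    (hZ : ∀ t, 0 < t → HasDerivAt Z (Z' t) t)
    (hflow₁ : ∀ t, 0 < t → Z' t = -σ • f' (X t))
    (hflow₂ : ∀ t, 0 < t → X t = gφs (Z t))
    (hX0 : X 0 = x₀) (hZ0 : Z 0 = z₀) (hx₀ : gφs z₀ = x₀)
    -- x* is a global minimizer of f and ∇φ*(z*) = x*
    (hxs : ∀ x, f xs ≤ f x) (hzs : gφs zs = xs) :
    Tendsto (fun t : ℝ => t ^ 2 * sInf ((fun u => ‖X' u‖ ^ 2) '' Set.Icc 0 t))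
      atTop (𝓝 0) := by
  classical
  -- Fenchel–Young and gradient duality facts
  have hbdd : ∀ w : EuclideanSpace ℝ (Fin n),
      BddAbove (range fun x => ⟪w, x⟫ - φ x) := fun w =>
    ⟨‖w - gradient φ 0‖ ^ 2 / (2 * σ) - φ 0, by
      rintro _ ⟨x, rfl⟩; exact aux_bdd φ σ hσ hφsc w x⟩
  have hFY : ∀ w x : EuclideanSpace ℝ (Fin n), ⟪w, x⟫ - φ x ≤ fenchelConj φ w :=
    fun w x => le_ciSup (hbdd w) x
  have hgrad : ∀ w, gradient φ (gφs w) = w := by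
    intro w
    obtain ⟨xb, hxb⟩ := aux_max φ σ hσ hφsc hφC2.continuous w
    have hval : fenchelConj φ w = ⟪w, xb⟫ - φ xb :=
      le_antisymm (ciSup_le hxb) (hFY w xb)
    have hsub : ∀ u, fenchelConj φ w + ⟪xb, u - w⟫ ≤ fenchelConj φ u := by
      intro u
      have h1 := hFY u xb
      have h2 : ⟪xb, u - w⟫ = ⟪u, xb⟫ - ⟪w, xb⟫ := by
        rw [real_inner_comm, inner_sub_left]
      rw [hval]; linarith
    have hxbeq : xb = gφs w := aux_subgrad (hgφs w) hsub
    have hφd : HasGradientAt φ (gradient φ xb) xb :=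
      ((hφC2.differentiable (by norm_num)) xb).hasGradientAt
    have hmax : IsLocalMax (fun x => ⟪w, x⟫ - φ x) xb := Eventually.of_forall hxb
    have h1 : HasFDerivAt (fun x : EuclideanSpace ℝ (Fin n) => ⟪w, x⟫)
        (InnerProductSpace.toDual ℝ _ w) xb := by
      have heq : (fun x : EuclideanSpace ℝ (Fin n) => ⟪w, x⟫) =
          ⇑(InnerProductSpace.toDual ℝ _ w) := by
        ext x; simp [InnerProductSpace.toDual_apply_apply]
      rw [heq]
      exact (InnerProductSpace.toDual ℝ _ w).hasFDerivAt
    have hFg : HasFDerivAt (fun x => ⟪w, x⟫ - φ x)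
        (InnerProductSpace.toDual ℝ _ (w - gradient φ xb)) xb := by
      have := h1.sub hφd.hasFDerivAt
      rwa [← map_sub] at this
    have h0 := hmax.hasFDerivAt_eq_zero hFg
    have hsub0 : w - gradient φ xb = 0 := by
      have := congrArg (InnerProductSpace.toDual ℝ _).symm h0
      simpa [gradient] using this
    rw [← hxbeq]
    exact (sub_eq_zero.1 hsub0).symm
  -- the Lyapunov functions
  set g : ℝ → ℝ := fun t => f (X t) - f xs with hgdef
  set W : ℝ → ℝ := fun t => fenchelConj φ (Z t) - ⟪Z t, xs⟫ + φ xs with hWdef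
  have hg0 : ∀ t, 0 ≤ g t := fun t => sub_nonneg.2 (hxs _)
  have hW0 : ∀ t, 0 ≤ W t := by
    intro t
    have := hFY (Z t) xs
    simp only [hWdef]
    linarith
  -- strong monotonicity along the flow
  have hmono : ∀ s t : ℝ, 0 < s → 0 < t →
      σ * ‖X t - X s‖ ^ 2 ≤ ⟪Z t - Z s, X t - X s⟫ := by
    intro s t hs ht
    have e1 : gradient φ (X s) = Z s := by rw [hflow₂ s hs]; exact hgrad (Z s)
    have e2 : gradient φ (X t) = Z t := by rw [hflow₂ t ht]; exact hgrad (Z t)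
    have i1 := hφsc (X s) (X t); rw [e1] at i1
    have i2 := hφsc (X t) (X s); rw [e2] at i2
    have en : ‖X s - X t‖ = ‖X t - X s‖ := norm_sub_rev _ _
    rw [en] at i2
    have j1 : ⟪Z t, X s - X t⟫ = -⟪Z t, X t - X s⟫ := by
      rw [show X s - X t = -(X t - X s) by abel, inner_neg_right]
    rw [j1] at i2
    have j2 : ⟪Z t - Z s, X t - X s⟫ = ⟪Z t, X t - X s⟫ - ⟪Z s, X t - X s⟫ :=
      inner_sub_left _ _ _
    rw [j2]
    linarith
  -- cocoercivity along the flow, infinitesimal version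
  have hcoco : ∀ t, 0 < t → σ * ‖X' t‖ ^ 2 ≤ ⟪Z' t, X' t⟫ := by
    intro t ht
    have hXs := hasDerivAt_iff_tendsto_slope.1 (hX t ht)
    have hZs := hasDerivAt_iff_tendsto_slope.1 (hZ t ht)
    have h1 : Tendsto (fun s => ⟪slope Z t s, slope X t s⟫) (𝓝[≠] t)
        (𝓝 ⟪Z' t, X' t⟫) := hZs.inner hXs
    have h2 : Tendsto (fun s => σ * ‖slope X t s‖ ^ 2) (𝓝[≠] t)
        (𝓝 (σ * ‖X' t‖ ^ 2)) := ((hXs.norm).pow 2).const_mul σ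
    refine le_of_tendsto_of_tendsto h2 h1 ?_
    have hev : ∀ᶠ s in 𝓝[≠] t, 0 < s :=
      eventually_nhdsWithin_of_eventually_nhds (eventually_gt_nhds ht)
    filter_upwards [hev] with s hs
    have hm := hmono t s ht hs
    have e1 : slope X t s = (s - t)⁻¹ • (X s - X t) := by
      simp [slope, vsub_eq_sub]
    have e2 : slope Z t s = (s - t)⁻¹ • (Z s - Z t) := by
      simp [slope, vsub_eq_sub]
    rw [e1, e2, real_inner_smul_left, real_inner_smul_right, norm_smul]
    have hsym : ⟪Z s - Z t, X s - X t⟫ = ⟪Z t - Z s, X t - X s⟫ := by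
      rw [show Z s - Z t = -(Z t - Z s) by abel, show X s - X t = -(X t - X s) by abel,
        inner_neg_neg]
    rw [hsym]
    have hnn : (0:ℝ) ≤ ((s - t)⁻¹) ^ 2 := sq_nonneg _
    have expand : (‖(s - t)⁻¹‖ * ‖X s - X t‖) ^ 2 =
        ((s - t)⁻¹) ^ 2 * ‖X s - X t‖ ^ 2 := by
      simp [mul_pow, Real.norm_eq_abs, sq_abs]
    rw [expand]
    have hm' : σ * ‖X s - X t‖ ^ 2 ≤ ⟪Z t - Z s, X t - X s⟫ := by
      rw [hsym] at hm; exact hm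
    calc σ * (((s - t)⁻¹) ^ 2 * ‖X s - X t‖ ^ 2)
        = ((s - t)⁻¹) ^ 2 * (σ * ‖X s - X t‖ ^ 2) := by ring
      _ ≤ ((s - t)⁻¹) ^ 2 * ⟪Z t - Z s, X t - X s⟫ := by
          exact mul_le_mul_of_nonneg_left hm' hnn
      _ = (s - t)⁻¹ * ((s - t)⁻¹ * ⟪Z t - Z s, X t - X s⟫) := by ring
  -- derivative of g
  have hgd : ∀ t, 0 < t → HasDerivAt g ⟪f' (X t), X' t⟫ t := by
    intro t ht
    have h1 := (hfd (X t)).hasFDerivAt.comp_hasDerivAt t (hX t ht)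
    have h2 : HasDerivAt (fun u => f (X u)) ⟪f' (X t), X' t⟫ t := by
      simpa [InnerProductSpace.toDual_apply_apply, Function.comp_def] using h1
    simpa [hgdef] using h2.sub_const (f xs)
  have hgd_le : ∀ t, 0 < t → ⟪f' (X t), X' t⟫ ≤ -‖X' t‖ ^ 2 := by
    intro t ht
    have h1 := hcoco t ht
    rw [hflow₁ t ht, real_inner_smul_left] at h1
    nlinarith
  -- derivative of W
  have hWd : ∀ t, 0 < t → HasDerivAt W ⟪X t - xs, Z' t⟫ t := by
    intro t ht
    have h1 := (hgφs (Z t)).hasFDerivAt.comp_hasDerivAt t (hZ t ht)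
    have h1' : HasDerivAt (fun u => fenchelConj φ (Z u)) ⟪gφs (Z t), Z' t⟫ t := by
      simpa [InnerProductSpace.toDual_apply_apply, Function.comp_def] using h1
    have h2 : HasDerivAt (fun u => ⟪Z u, xs⟫) (⟪Z t, (0 : EuclideanSpace ℝ (Fin n))⟫ + ⟪Z' t, xs⟫) t :=
      (hZ t ht).inner ℝ (hasDerivAt_const t xs)
    have h2' : HasDerivAt (fun u => ⟪Z u, xs⟫) ⟪Z' t, xs⟫ t := by simpa using h2
    have h3 := (h1'.sub h2').add_const (φ xs)
    have hval : ⟪gφs (Z t), Z' t⟫ - ⟪Z' t, xs⟫ = ⟪X t - xs, Z' t⟫ := by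
      rw [← hflow₂ t ht, inner_sub_left, real_inner_comm (Z' t) xs]
    rw [hval] at h3
    exact h3
  have hWd_le : ∀ t, 0 < t → ⟪X t - xs, Z' t⟫ ≤ -(σ * g t) := by
    intro t ht
    rw [hflow₁ t ht, real_inner_smul_right]
    have hcg := aux_convex_grad hfconv (hfd (X t)) xs
    have h4 : ⟪f' (X t), xs - X t⟫ = -⟪X t - xs, f' (X t)⟫ := by
      rw [real_inner_comm, show xs - X t = -(X t - xs) by abel, inner_neg_left]
    rw [h4] at hcg
    have h5 : g t ≤ ⟪X t - xs, f' (X t)⟫ := by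
      simp only [hgdef]; linarith
    nlinarith
  -- monotonicity consequences
  have gant : ∀ s t : ℝ, 0 < s → s ≤ t → g t ≤ g s := by
    intro s t hs hst
    refine aux_decay hs hst (fun u hu => hgd u hu) (fun u hu1 _ => ?_)
    have := hgd_le u (hs.trans hu1)
    have h2 : (0:ℝ) ≤ ‖X' u‖ ^ 2 := by positivity
    linarith
  have Want : ∀ a b : ℝ, 0 < a → a ≤ b → W b ≤ W a := by
    intro a b ha hab
    refine aux_decay ha hab (fun u hu => hWd u hu) (fun u hu1 _ => ?_)
    have := hWd_le u (ha.trans hu1)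
    have := hg0 u
    nlinarith
  -- key step inequalities
  have Wstep : ∀ t : ℝ, 2 ≤ t → σ * (t / 2) * g t ≤ W (t / 2) - W t := by
    intro t ht2
    have ht0 : 0 < t := by linarith
    have hh : (0:ℝ) < t / 2 := by linarith
    have hd : ∀ u, 0 < u → HasDerivAt (fun u => W u + (σ * g t) * u)
        (⟪X u - xs, Z' u⟫ + (σ * g t) * 1) u := fun u hu =>
      (hWd u hu).add ((hasDerivAt_id u).const_mul (σ * g t))
    have hbound : ∀ u, t / 2 < u → u < t → ⟪X u - xs, Z' u⟫ + (σ * g t) * 1 ≤ 0 := by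
      intro u hu1 hu2
      have hgu := gant u t (hh.trans hu1) hu2.le
      have := hWd_le u (hh.trans hu1)
      nlinarith
    have hstep := aux_decay (F := fun u => W u + (σ * g t) * u)
      (F' := fun u => ⟪X u - xs, Z' u⟫ + (σ * g t) * 1)
      hh (by linarith : t / 2 ≤ t) hd hbound
    have h1 : σ * g t * t - σ * g t * (t / 2) = σ * (t / 2) * g t := by ring
    linarith
  -- infimum facts
  set m : ℝ → ℝ := fun t => sInf ((fun u => ‖X' u‖ ^ 2) '' Set.Icc 0 t) with hmdef
  have mbdd : ∀ t : ℝ, BddBelow ((fun u => ‖X' u‖ ^ 2) '' Set.Icc 0 t) := by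
    intro t
    refine ⟨0, ?_⟩
    rintro _ ⟨u, _, rfl⟩
    positivity
  have m0 : ∀ t : ℝ, 0 ≤ t → 0 ≤ m t := by
    intro t ht
    refine le_csInf ⟨_, ⟨0, ⟨le_refl 0, ht⟩, rfl⟩⟩ ?_
    rintro _ ⟨u, _, rfl⟩
    positivity
  have mle : ∀ t u : ℝ, u ∈ Set.Icc 0 t → m t ≤ ‖X' u‖ ^ 2 :=
    fun t u hu => csInf_le (mbdd t) ⟨u, hu, rfl⟩
  have gstep : ∀ t : ℝ, 2 ≤ t → t ^ 2 / 4 * m t ≤ t * g (t / 2) - t * g t := by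
    intro t ht2
    have ht0 : 0 < t := by linarith
    have hh : (0:ℝ) < t / 2 := by linarith
    obtain ⟨c, hc'⟩ : ∃ c : ℝ, c = g (t / 2) - (t / 2) * m t := ⟨_, rfl⟩
    have hd : ∀ u, 0 < u → HasDerivAt (fun u => u * g u - c * u)
        (1 * g u + u * ⟪f' (X u), X' u⟫ - c * 1) u := fun u hu =>
      ((hasDerivAt_id u).mul (hgd u hu)).sub ((hasDerivAt_id u).const_mul c)
    have hbound : ∀ u, t / 2 < u → u < t →
        1 * g u + u * ⟪f' (X u), X' u⟫ - c * 1 ≤ 0 := by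
      intro u hu1 hu2
      have hgu := gant (t / 2) u hh hu1.le
      have hXu := hgd_le u (hh.trans hu1)
      have hmu := mle t u ⟨(hh.trans hu1).le, hu2.le⟩
      have hm0 := m0 t ht0.le
      have hu0 : 0 < u := hh.trans hu1
      have h2 : u * ⟪f' (X u), X' u⟫ ≤ -(u * ‖X' u‖ ^ 2) := by
        have := mul_le_mul_of_nonneg_left hXu hu0.le
        linarith
      have h3 : u * m t ≤ u * ‖X' u‖ ^ 2 := mul_le_mul_of_nonneg_left hmu hu0.le
      have h4 : (t / 2) * m t ≤ u * m t := mul_le_mul_of_nonneg_right hu1.le hm0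
      have k1 : u * ⟪f' (X u), X' u⟫ ≤ -((t / 2) * m t) := by linarith
      have k2 : 1 * g u + u * ⟪f' (X u), X' u⟫ - c * 1
          = g u + u * ⟪f' (X u), X' u⟫ - c := by ring
      rw [k2, hc']
      linarith
    have hstep := aux_decay (F := fun u => u * g u - c * u)
      (F' := fun u => 1 * g u + u * ⟪f' (X u), X' u⟫ - c * 1)
      hh (by linarith : t / 2 ≤ t) hd hbound
    nlinarith
  -- limits
  set V : ℝ → ℝ := fun t => W (max t 1) with hVdef
  have Vant : Antitone V := by
    intro s t hst
    exact Want (max s 1) (max t 1)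
      (lt_of_lt_of_le one_pos (le_max_right s 1)) (max_le_max hst (le_refl 1))
  have Vbdd : BddBelow (range V) := ⟨0, by rintro _ ⟨t, rfl⟩; exact hW0 _⟩
  have Vtend := tendsto_atTop_ciInf Vant Vbdd
  have halfto : Tendsto (fun t : ℝ => t / 2) atTop atTop :=
    tendsto_id.atTop_div_const two_pos
  have Wdiff : Tendsto (fun t => W (t / 2) - W t) atTop (𝓝 0) := by
    have h1 : Tendsto (fun t => V (t / 2) - V t) atTop (𝓝 ((⨅ i, V i) - ⨅ i, V i)) :=
      (Vtend.comp halfto).sub Vtend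
    rw [sub_self] at h1
    refine h1.congr' ?_
    filter_upwards [eventually_ge_atTop (2:ℝ)] with t ht
    have e1 : max (t / 2) 1 = t / 2 := max_eq_left (by linarith)
    have e2 : max t 1 = t := max_eq_left (by linarith)
    simp only [hVdef, Function.comp, e1, e2]
  have tg0 : Tendsto (fun t => t * g t) atTop (𝓝 0) := by
    have hup : Tendsto (fun t => (2 / σ) * (W (t / 2) - W t)) atTop (𝓝 0) := by
      simpa using Wdiff.const_mul (2 / σ)
    refine tendsto_of_tendsto_of_tendsto_of_le_of_le' tendsto_const_nhds hup ?_ ?_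
    · filter_upwards [eventually_ge_atTop (0:ℝ)] with t ht
      exact mul_nonneg ht (hg0 t)
    · filter_upwards [eventually_ge_atTop (2:ℝ)] with t ht
      have := Wstep t ht
      have hσ' : 0 < σ := hσ
      rw [← sub_nonneg]
      have key : (2 / σ) * (W (t / 2) - W t) - t * g t
          = (2 / σ) * ((W (t / 2) - W t) - σ * (t / 2) * g t) := by
        field_simp
      rw [key]
      have h8 : 0 ≤ (W (t / 2) - W t) - σ * (t / 2) * g t := by linarith
      positivity
  have tghalf : Tendsto (fun t => t * g (t / 2)) atTop (𝓝 0) := by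
    have h1 : Tendsto (fun t : ℝ => 2 * ((t / 2) * g (t / 2))) atTop (𝓝 0) := by
      simpa using ((tg0.comp halfto).const_mul 2)
    refine Tendsto.congr (fun t => by ring) h1
  have hup : Tendsto (fun t => 4 * ((t * g (t / 2)) - t * g t)) atTop (𝓝 0) := by
    simpa using ((tghalf.sub tg0).const_mul 4)
  refine tendsto_of_tendsto_of_tendsto_of_le_of_le' tendsto_const_nhds hup ?_ ?_
  · filter_upwards [eventually_ge_atTop (0:ℝ)] with t ht
    exact mul_nonneg (by positivity) (m0 t ht)
  · filter_upwards [eventually_ge_atTop (2:ℝ)] with t ht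
    have := gstep t ht
    have hmeq : sInf ((fun u => ‖X' u‖ ^ 2) '' Set.Icc 0 t) = m t := rfl
    rw [hmeq]
    linarith
end

section
/- Let {x_k}, {z_k} be generated by the mirror descent iteration z_{k+1} = z_k − σ s ∇f(x_k), x_{k+1} = ∇φ*(z_{k+1}), with initialization ∇φ*(z₀) = x₀. If the step size satisfies 0 < s ≤ 1/L, then for every k ≥ 1, f(x_k) − f(x*) ≤ D_φ(x*, x₀)/(kσs), where D_φ(x*, x₀) = φ(x*) − φ(x₀) − ⟨z₀, x* − x₀⟩. -/
open Set Filter Topology intervalIntegral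
open scoped RealInnerProductSpace

variable {n : ℕ}
local notation "F" => EuclideanSpace ℝ (Fin n)

/-- gradient of `w ↦ ⟪w, c⟫`. -/
lemma md_inner_hasGradientAt (c v : F) : HasGradientAt (fun w : F => ⟪w, c⟫) c v := by
  rw [hasGradientAt_iff_hasFDerivAt]
  have h : (fun w : F => ⟪w, c⟫) = fun w : F => (InnerProductSpace.toDual ℝ F c) w := by
    funext w; rw [InnerProductSpace.toDual_apply_apply]; exact real_inner_comm c w
  rw [h]
  exact (InnerProductSpace.toDual ℝ F c).hasFDerivAt

/-- first-order condition for convexity. -/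
lemma md_convex_lower {g : F → ℝ} {g' x₀ : F} (hg : ConvexOn ℝ Set.univ g)
    (hd : HasGradientAt g g' x₀) (y : F) : g x₀ + ⟪g', y - x₀⟫ ≤ g y := by
  set γ : ℝ → F := fun t => x₀ + t • (y - x₀) with hγ
  have hγd : HasDerivAt γ (y - x₀) 0 := by
    simpa [hγ] using ((hasDerivAt_id (0:ℝ)).smul_const (y - x₀)).const_add x₀
  have hcomp : HasDerivAt (g ∘ γ) ⟪g', y - x₀⟫ 0 := by
    have hγ0 : γ 0 = x₀ := by simp [hγ]
    have hd' : HasFDerivAt g ((InnerProductSpace.toDual ℝ F) g') (γ 0) := by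
      rw [hγ0]; exact hasGradientAt_iff_hasFDerivAt.mp hd
    have := hd'.comp_hasDerivAt 0 hγd
    simpa [InnerProductSpace.toDual_apply_apply] using this
  have hT : Tendsto (slope (g ∘ γ) 0) (𝓝[>] 0) (𝓝 ⟪g', y - x₀⟫) :=
    (hasDerivAt_iff_tendsto_slope.mp hcomp).mono_left
      (nhdsWithin_mono _ (fun t ht => ne_of_gt ht))
  have hub : ∀ᶠ t in 𝓝[>] (0:ℝ), slope (g ∘ γ) 0 t ≤ g y - g x₀ := by
    filter_upwards [Ioc_mem_nhdsGT_of_mem (Set.mem_Ico.mpr ⟨le_refl (0:ℝ), one_pos⟩)] with t ht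
    have ht0 : 0 < t := ht.1
    have hconv := hg.2 (Set.mem_univ x₀) (Set.mem_univ y) (show (0:ℝ) ≤ 1 - t by linarith [ht.2]) ht0.le (by ring)
    have hpt : γ t = (1 - t) • x₀ + t • y := by
      simp [hγ, smul_sub, sub_smul, one_smul]; abel
    have hγ0 : γ 0 = x₀ := by simp [hγ]
    rw [slope_def_field]
    simp only [Function.comp_apply, hγ0, hpt, sub_zero]
    rw [div_le_iff₀ ht0]
    simp only [smul_eq_mul] at hconv
    nlinarith [hconv]
  have := le_of_tendsto hT hub
  linarith

/-- Descent lemma for L-smooth functions. -/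
lemma md_descent {f : F → ℝ} {f' : F → F} {L : ℝ} (hL : 0 ≤ L)
    (hfd : ∀ x, HasGradientAt f (f' x) x)
    (hfL : ∀ x y, ‖f' x - f' y‖ ≤ L * ‖x - y‖) (a b : F) :
    f b ≤ f a + ⟪f' a, b - a⟫ + L / 2 * ‖b - a‖ ^ 2 := by
  set γ : ℝ → F := fun t => a + t • (b - a) with hγ
  have hγd : ∀ t : ℝ, HasDerivAt γ (b - a) t := by
    intro t; simpa [hγ] using ((hasDerivAt_id t).smul_const (b - a)).const_add a
  have hderiv : ∀ t : ℝ, HasDerivAt (f ∘ γ) ⟪f' (γ t), b - a⟫ t := by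
    intro t
    have := (hasGradientAt_iff_hasFDerivAt.mp (hfd (γ t))).comp_hasDerivAt t (hγd t)
    simpa [InnerProductSpace.toDual_apply_apply] using this
  have hf'c : Continuous f' := by
    refine LipschitzWith.continuous (K := Real.toNNReal L) ?_
    refine LipschitzWith.of_dist_le_mul fun p q => ?_
    rw [dist_eq_norm, dist_eq_norm]
    calc ‖f' p - f' q‖ ≤ L * ‖p - q‖ := hfL p q
      _ ≤ Real.toNNReal L * ‖p - q‖ := by
          gcongr; exact Real.le_coe_toNNReal L
  have hγc : Continuous γ := by
    apply Continuous.add continuous_const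
    exact (continuous_id.smul continuous_const)
  have hdc : Continuous fun t : ℝ => ⟪f' (γ t), b - a⟫ :=
    (hf'c.comp hγc).inner continuous_const
  have hFTC : ∫ t in (0:ℝ)..1, ⟪f' (γ t), b - a⟫ = f b - f a := by
    have := intervalIntegral.integral_eq_sub_of_hasDerivAt
      (fun t _ => hderiv t) (hdc.intervalIntegrable 0 1)
    simpa [hγ, Function.comp] using this
  have hbound : ∀ t ∈ Set.Icc (0:ℝ) 1,
      ⟪f' (γ t), b - a⟫ ≤ ⟪f' a, b - a⟫ + (L * ‖b - a‖ ^ 2) * t := by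
    intro t ht
    have h1 : ⟪f' (γ t), b - a⟫ - ⟪f' a, b - a⟫ = ⟪f' (γ t) - f' a, b - a⟫ := by
      rw [inner_sub_left]
    have h2 : ⟪f' (γ t) - f' a, b - a⟫ ≤ ‖f' (γ t) - f' a‖ * ‖b - a‖ :=
      real_inner_le_norm _ _
    have h3 : ‖f' (γ t) - f' a‖ ≤ L * (t * ‖b - a‖) := by
      have := hfL (γ t) a
      have hn : ‖γ t - a‖ = t * ‖b - a‖ := by
        simp [hγ, norm_smul, abs_of_nonneg ht.1]
      rwa [hn] at this
    have h4 : ‖f' (γ t) - f' a‖ * ‖b - a‖ ≤ L * (t * ‖b - a‖) * ‖b - a‖ := by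
      gcongr
    nlinarith [h4]
  have hint : ∫ t in (0:ℝ)..1, ⟪f' (γ t), b - a⟫
      ≤ ∫ t in (0:ℝ)..1, (⟪f' a, b - a⟫ + (L * ‖b - a‖ ^ 2) * t) := by
    apply intervalIntegral.integral_mono_on zero_le_one (hdc.intervalIntegrable 0 1)
    · exact (Continuous.intervalIntegrable (by continuity) 0 1)
    · exact hbound
  have hval : ∫ t in (0:ℝ)..1, (⟪f' a, b - a⟫ + (L * ‖b - a‖ ^ 2) * t)
      = ⟪f' a, b - a⟫ + L / 2 * ‖b - a‖ ^ 2 := by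
    rw [intervalIntegral.integral_add (intervalIntegrable_const)
      (intervalIntegrable_id.const_mul _)]
    rw [intervalIntegral.integral_const_mul, integral_id, intervalIntegral.integral_const]
    simp; ring
  rw [hFTC] at hint
  rw [hval] at hint
  linarith

/-- Strongly convex Bregman lower bound (given a subgradient). -/
lemma md_strong_lower {φ : F → ℝ} {σ : ℝ} (hσ : 0 < σ)
    (hφsc : StrongConvexOn Set.univ σ φ) {p w : F}
    (hsub : ∀ y, φ p + ⟪w, y - p⟫ ≤ φ y) (y : F) :
    φ p + ⟪w, y - p⟫ + σ / 2 * ‖y - p‖ ^ 2 ≤ φ y := by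
  set A : ℝ := ⟪w, y - p⟫
  set B : ℝ := σ / 2 * ‖y - p‖ ^ 2 with hB
  have hB0 : 0 ≤ B := by positivity
  have key : ∀ t : ℝ, 0 < t → t < 1 → φ p + A + B ≤ φ y + t * B := by
    intro t ht0 ht1
    have hconv := hφsc.2 (Set.mem_univ y) (Set.mem_univ p)
      ht0.le (show (0:ℝ) ≤ 1 - t by linarith) (by ring)
    have hq : t • y + (1 - t) • p - p = t • (y - p) := by
      rw [smul_sub, sub_smul, one_smul]; abel
    have hs := hsub (t • y + (1 - t) • p)
    rw [hq, real_inner_smul_right] at hs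
    simp only [smul_eq_mul] at hconv
    -- hconv : φ (t•y + (1-t)•p) ≤ t * φ y + (1-t) * φ p - t*(1-t)*(σ/2 * ‖y-p‖^2)
    have h2 : φ p + t * A ≤ t * φ y + (1 - t) * φ p - t * (1 - t) * (σ / 2 * ‖y - p‖ ^ 2) :=
      le_trans hs hconv
    have h3 : t * (φ p + A + B) ≤ t * (φ y + t * B) := by
      simp only [hB] at *
      nlinarith [h2]
    have := (mul_le_mul_iff_right₀ ht0).mp h3
    linarith
  have : φ p + A + B ≤ φ y := by
    refine le_of_forall_pos_le_add fun ε hε => ?_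
    rcases le_or_gt B 0 with hB' | hB'
    · have := key (1/2) (by norm_num) (by norm_num); nlinarith
    · set t : ℝ := min (1/2) (ε / (2 * B)) with htd
      have ht0 : 0 < t := lt_min (by norm_num) (by positivity)
      have ht1 : t < 1 := lt_of_le_of_lt (min_le_left _ _) (by norm_num)
      have htB : t * B ≤ ε := by
        have : t ≤ ε / (2 * B) := min_le_right _ _
        calc t * B ≤ (ε / (2 * B)) * B := by gcongr
          _ = ε / 2 := by field_simp
          _ ≤ ε := by linarith
      have := key t ht0 ht1
      linarith
  linarith

/-- Existence of a global minimizer of `y ↦ φ y - ⟪v, y⟫` for strongly convex `φ`. -/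
lemma md_exists_min {φ : F → ℝ} {σ : ℝ} (hσ : 0 < σ)
    (hφsc : StrongConvexOn Set.univ σ φ) (v : F) :
    ∃ m : F, ∀ y : F, φ m - ⟪v, m⟫ ≤ φ y - ⟪v, y⟫ := by
  have hφconv : ConvexOn ℝ Set.univ φ := hφsc.convexOn (fun r => by positivity)
  have hφcont : Continuous φ :=
    continuousOn_univ.mp (hφconv.continuousOn isOpen_univ)
  set c : F → ℝ := fun y => φ y - σ / 2 * ‖y‖ ^ 2 with hc
  have hcconv : ConvexOn ℝ Set.univ c := strongConvexOn_iff_convex.mp hφsc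
  have hccont : Continuous c := by
    apply hφcont.sub; continuity
  obtain ⟨p, hpmem, hp⟩ := (isCompact_closedBall (0:F) 1).exists_isMinOn
    ⟨0, by simp⟩ hccont.continuousOn
  set ψ : F → ℝ := fun y => φ y - ⟪v, y⟫ with hψ
  have hψcont : Continuous ψ := hφcont.sub (continuous_const.inner continuous_id)
  -- lower bound for c
  set K : ℝ := |c p| + |c 0| with hK
  have hK0 : 0 ≤ K := by positivity
  have hclow : ∀ y : F, 1 ≤ ‖y‖ → (-K) * ‖y‖ - |c 0| ≤ c y := by
    intro y hy
    have hy0 : 0 < ‖y‖ := lt_of_lt_of_le one_pos hy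
    set t : ℝ := ‖y‖⁻¹ with htdef
    have ht0 : 0 < t := by positivity
    have ht1 : t ≤ 1 := by rw [htdef]; exact inv_le_one_of_one_le₀ hy
    have hu : t • y ∈ Metric.closedBall (0:F) 1 := by
      simp [norm_smul, abs_of_pos ht0, htdef, inv_mul_cancel₀ hy0.ne']
    have hcu : c p ≤ c (t • y) := hp hu
    have hconv := hcconv.2 (Set.mem_univ y) (Set.mem_univ (0:F))
      ht0.le (show (0:ℝ) ≤ 1 - t by linarith) (by ring)
    simp only [smul_zero, add_zero, smul_eq_mul] at hconv
    -- hconv : c (t • y) ≤ t * c y + (1 - t) * c 0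
    have h1 : c p ≤ t * c y + (1 - t) * c 0 := le_trans hcu hconv
    -- multiply by ‖y‖ = t⁻¹
    have h2 : ‖y‖ * c p ≤ c y + (‖y‖ - 1) * c 0 := by
      have h3 : ‖y‖ * c p ≤ ‖y‖ * (t * c y + (1 - t) * c 0) :=
        mul_le_mul_of_nonneg_left h1 hy0.le
      have ht : ‖y‖ * t = 1 := by rw [htdef, mul_inv_cancel₀ hy0.ne']
      calc ‖y‖ * c p ≤ ‖y‖ * (t * c y + (1 - t) * c 0) := h3
        _ = (‖y‖ * t) * c y + (‖y‖ - ‖y‖ * t) * c 0 := by ring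
        _ = c y + (‖y‖ - 1) * c 0 := by rw [ht]; ring
    have habs1 : -|c p| ≤ c p := neg_abs_le _
    have habs2 : -|c 0| ≤ c 0 ∧ c 0 ≤ |c 0| := ⟨neg_abs_le _, le_abs_self _⟩
    nlinarith [h2, mul_le_mul_of_nonneg_left habs1 hy0.le, hy]
  -- coercivity of ψ
  set A : ℝ := K + ‖v‖ with hA
  have hA0 : 0 ≤ A := by positivity
  set R : ℝ := max 1 ((2 / σ) * (A + |c 0| + |ψ 0| + 1)) with hR
  have hcoer : ∀ y : F, R ≤ ‖y‖ → ψ 0 ≤ ψ y := by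
    intro y hy
    have hy1 : 1 ≤ ‖y‖ := le_trans (le_max_left _ _) hy
    have hy2 : (2 / σ) * (A + |c 0| + |ψ 0| + 1) ≤ ‖y‖ := le_trans (le_max_right _ _) hy
    have hσy : σ * ‖y‖ ≥ 2 * (A + |c 0| + |ψ 0| + 1) := by
      rw [ge_iff_le, ← div_le_iff₀' hσ]
      calc 2 * (A + |c 0| + |ψ 0| + 1) / σ = (2 / σ) * (A + |c 0| + |ψ 0| + 1) := by ring
        _ ≤ ‖y‖ := hy2
    have hinner : ⟪v, y⟫ ≤ ‖v‖ * ‖y‖ := real_inner_le_norm _ _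
    have hlow := hclow y hy1
    have hψy : ψ y = c y + σ / 2 * ‖y‖ ^ 2 - ⟪v, y⟫ := by
      simp only [hψ, hc]; ring
    have habs : ψ 0 ≤ |ψ 0| := le_abs_self _
    rw [hψy]
    have h5 : 2 * (A + |c 0| + |ψ 0| + 1) * ‖y‖ ≤ σ * ‖y‖ * ‖y‖ :=
      mul_le_mul_of_nonneg_right hσy.le (norm_nonneg y)
    have h6 : |c 0| * 1 ≤ |c 0| * ‖y‖ := by gcongr
    have h7 : |ψ 0| * 1 ≤ |ψ 0| * ‖y‖ := by gcongr
    have hAr : A * ‖y‖ = K * ‖y‖ + ‖v‖ * ‖y‖ := by rw [hA]; ring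
    clear_value c ψ K A R
    nlinarith [h5, h6, h7, hAr, hy1, hlow, hinner, habs]
  have hev : ∀ᶠ y in cocompact F, ψ 0 ≤ ψ y := by
    rw [Filter.eventually_iff, Filter.mem_cocompact]
    refine ⟨Metric.closedBall 0 R, isCompact_closedBall _ _, ?_⟩
    intro y hy
    simp only [Set.mem_compl_iff, Metric.mem_closedBall, dist_zero_right, not_le] at hy
    exact hcoer y hy.le
  obtain ⟨m, hm⟩ := hψcont.exists_forall_le' 0 hev
  exact ⟨m, hm⟩

/-- `z` is a subgradient of `φ` at `∇φ*(z)`. -/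
lemma md_conj_subgrad {φ : F → ℝ} {σ : ℝ} (hσ : 0 < σ)
    (hφsc : StrongConvexOn Set.univ σ φ) {gφs : F → F}
    (hg : ∀ z, HasGradientAt (fenchelConj φ) (gφs z) z)
    (hmin : ∀ v : F, ∃ m : F, ∀ y : F, φ m - ⟪v, m⟫ ≤ φ y - ⟪v, y⟫)
    (v y : F) : φ (gφs v) + ⟪v, y - gφs v⟫ ≤ φ y := by
  choose m hm using hmin
  have hF : ∀ w : F, fenchelConj φ w = ⟪w, m w⟫ - φ (m w) := by
    intro w
    refine le_antisymm (ciSup_le fun u => by linarith [hm w u]) ?_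
    have hbdd : BddAbove (Set.range fun u : F => ⟪w, u⟫ - φ u) := by
      refine ⟨⟪w, m w⟫ - φ (m w), ?_⟩
      rintro _ ⟨u, rfl⟩
      show ⟪w, u⟫ - φ u ≤ ⟪w, m w⟫ - φ (m w)
      linarith [hm w u]
    exact le_ciSup hbdd (m w)
  -- the function h w = φ*(w) - ⟪w, m v⟫ has global min at v
  set h : F → ℝ := fun w => fenchelConj φ w - ⟪w, m v⟫ with hh
  have hminh : ∀ w, h v ≤ h w := by
    intro w
    have h1 : φ (m w) - ⟪w, m w⟫ ≤ φ (m v) - ⟪w, m v⟫ := hm w (m v)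
    have h2 : h w = ⟪w, m w⟫ - φ (m w) - ⟪w, m v⟫ := by simp only [hh]; rw [hF]
    have h3 : h v = -φ (m v) := by simp only [hh]; rw [hF]; ring
    rw [h2, h3]; linarith
  have hlocal : IsLocalMin h v := Filter.Eventually.of_forall hminh
  have hd : HasFDerivAt h (InnerProductSpace.toDual ℝ F (gφs v - m v)) v := by
    have h1 := hasGradientAt_iff_hasFDerivAt.mp (hg v)
    have h2 := hasGradientAt_iff_hasFDerivAt.mp (md_inner_hasGradientAt (m v) v)
    have := h1.sub h2
    rwa [← map_sub] at this
  have hzero := hlocal.hasFDerivAt_eq_zero hd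
  have : gφs v - m v = 0 := by
    have := congrArg (fun T => (InnerProductSpace.toDual ℝ F).symm T) hzero
    simpa using this
  have hgv : gφs v = m v := by rwa [sub_eq_zero] at this
  rw [hgv]
  have := hm v y
  rw [inner_sub_right]
  linarith


set_option maxHeartbeats 2000000 in
/-- Discrete mirror descent with step size `0 < s ≤ 1/L` satisfies
`f(x_k) − f(x*) ≤ D_φ(x*, x₀)/(kσs)` for every `k ≥ 1`. -/
theorem mirror_descent_function_value_rate
{n : ℕ} (f φ : EuclideanSpace ℝ (Fin n) → ℝ)
    (f' gφs : EuclideanSpace ℝ (Fin n) → EuclideanSpace ℝ (Fin n))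
    (σ L s : ℝ) (hσ : 0 < σ)
    -- f is convex and differentiable with L-Lipschitz gradient
    (hfconv : ConvexOn ℝ Set.univ f)
    (hfd : ∀ x, HasGradientAt f (f' x) x)
    (hfL : ∀ x y, ‖f' x - f' y‖ ≤ L * ‖x - y‖)
    -- φ is σ-strongly convex
    (hφsc : StrongConvexOn Set.univ σ φ)
    -- φ* is differentiable with gradient gφs
    (hgφs : ∀ z, HasGradientAt (fenchelConj φ) (gφs z) z)
    -- the mirror descent iteration
    (x z : ℕ → EuclideanSpace ℝ (Fin n))
    (hz : ∀ k : ℕ, z (k + 1) = z k - (σ * s) • f' (x k))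
    (hx : ∀ k : ℕ, x (k + 1) = gφs (z (k + 1)))
    (hx0 : gφs (z 0) = x 0)
    -- x* is a global minimizer of f and ∇φ*(z*) = x*
    (xs zs : EuclideanSpace ℝ (Fin n))
    (hxs : ∀ w, f xs ≤ f w) (hzs : gφs zs = xs)
    (hs : 0 < s) (hsL : s ≤ 1 / L) :
    ∀ k : ℕ, 1 ≤ k →
      f (x k) - f xs ≤ (φ xs - φ (x 0) - ⟪z 0, xs - x 0⟫) / ((k : ℝ) * σ * s) := by
  have hL : 0 < L := by
    rcases lt_trichotomy L 0 with h | h | h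
    · have : (1:ℝ)/L < 0 := div_neg_of_pos_of_neg one_pos h
      linarith
    · rw [h] at hsL; simp at hsL; linarith
    · exact h
  have hsL1 : s * L ≤ 1 := by
    rw [le_div_iff₀ hL] at hsL; exact hsL
  have hσs : 0 < σ * s := mul_pos hσ hs
  have hmin := md_exists_min hσ hφsc
  have hsubg : ∀ v y, φ (gφs v) + ⟪v, y - gφs v⟫ ≤ φ y :=
    md_conj_subgrad hσ hφsc hgφs hmin
  have hxk : ∀ k, x k = gφs (z k) := by
    intro k; cases k with
    | zero => exact hx0.symm
    | succ k => exact hx k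
  have hsub : ∀ k y, φ (x k) + ⟪z k, y - x k⟫ ≤ φ y := by
    intro k y; rw [hxk k]; exact hsubg (z k) y
  have hstrong : ∀ k y, φ (x k) + ⟪z k, y - x k⟫ + σ/2 * ‖y - x k‖^2 ≤ φ y :=
    fun k => md_strong_lower hσ hφsc (hsub k)
  set D : ℕ → ℝ := fun k => φ xs - φ (x k) - ⟪z k, xs - x k⟫ with hD
  have hDnn : ∀ k, 0 ≤ D k := by
    intro k
    have h1 := hstrong k xs
    have h2 : 0 ≤ σ/2 * ‖xs - x k‖^2 := by positivity
    simp only [hD]; linarith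
  -- per-step facts
  have hmono : ∀ k, f (x (k+1)) ≤ f (x k) := by
    intro k
    have hQ : (0:ℝ) ≤ ‖x (k+1) - x k‖^2 := by positivity
    have hdesc := md_descent hL.le hfd hfL (x k) (x (k+1))
    have hB1 := hstrong k (x (k+1))
    have hB2 := hsub (k+1) (x k)
    have enegz : ⟪z k, x k - x (k+1)⟫ = -⟪z k, x (k+1) - x k⟫ := by
      rw [← inner_neg_right]; congr 1; abel
    have enegf : ⟪f' (x k), x k - x (k+1)⟫ = -⟪f' (x k), x (k+1) - x k⟫ := by
      rw [← inner_neg_right]; congr 1; abel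
    have ez2 : ⟪z (k+1), x k - x (k+1)⟫
        = -⟪z k, x (k+1) - x k⟫ + σ*s*⟪f' (x k), x (k+1) - x k⟫ := by
      rw [hz k, inner_sub_left, real_inner_smul_left, enegz, enegf]; ring
    have hW : σ*s*⟪f' (x k), x (k+1) - x k⟫ + σ/2 * ‖x (k+1) - x k‖^2 ≤ 0 := by
      rw [ez2] at hB2; linarith
    have key : s * ⟪f' (x k), x (k+1) - x k⟫ ≤ -(‖x (k+1) - x k‖^2/2) := by
      have h' : σ * (s * ⟪f' (x k), x (k+1) - x k⟫)
          ≤ σ * (-(‖x (k+1) - x k‖^2/2)) := by nlinarith [hW]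
      exact (mul_le_mul_iff_right₀ hσ).mp h'
    have h'' : s * (⟪f' (x k), x (k+1) - x k⟫ + L/2 * ‖x (k+1) - x k‖^2) ≤ s * 0 := by
      nlinarith [key, hsL1, hQ]
    have hWQ : ⟪f' (x k), x (k+1) - x k⟫ + L/2 * ‖x (k+1) - x k‖^2 ≤ 0 := by
      have := (mul_le_mul_iff_right₀ hs).mp h''
      linarith
    linarith [hdesc, hWQ]
  have hstep : ∀ k, σ*s*(f (x (k+1)) - f xs) ≤ D k - D (k+1) := by
    intro k
    have hQ : (0:ℝ) ≤ ‖x (k+1) - x k‖^2 := by positivity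
    have hdesc := md_descent hL.le hfd hfL (x k) (x (k+1))
    have hconv := md_convex_lower hfconv (hfd (x k)) xs
    have hB1 := hstrong k (x (k+1))
    have esplit : ⟪f' (x k), xs - x k⟫
        = ⟪f' (x k), xs - x (k+1)⟫ + ⟪f' (x k), x (k+1) - x k⟫ := by
      rw [← inner_add_right]; congr 1; abel
    have hstar : f (x (k+1)) - f xs
        ≤ -⟪f' (x k), xs - x (k+1)⟫ + L/2 * ‖x (k+1) - x k‖^2 := by
      linarith [hdesc, hconv, esplit]
    have ezs : ⟪z (k+1), xs - x (k+1)⟫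
        = ⟪z k, xs - x (k+1)⟫ - σ*s*⟪f' (x k), xs - x (k+1)⟫ := by
      rw [hz k, inner_sub_left, real_inner_smul_left]
    have ezk : ⟪z k, xs - x k⟫
        = ⟪z k, xs - x (k+1)⟫ + ⟪z k, x (k+1) - x k⟫ := by
      rw [← inner_add_right]; congr 1; abel
    have h1 : σ*s*(f (x (k+1)) - f xs)
        ≤ σ*s*(-⟪f' (x k), xs - x (k+1)⟫ + L/2 * ‖x (k+1) - x k‖^2) :=
      mul_le_mul_of_nonneg_left hstar hσs.le
    simp only [hD]
    nlinarith [h1, hB1, hsL1, mul_nonneg hσ.le hQ, ezs, ezk]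
  clear_value D
  have hsum : ∀ k : ℕ, (k:ℝ)*(σ*s)*(f (x k) - f xs) ≤ D 0 - D k := by
    intro k
    induction k with
    | zero => simp
    | succ k ih =>
      have h2 : f (x (k+1)) - f xs ≤ f (x k) - f xs := by linarith [hmono k]
      have h3 : (k:ℝ)*(σ*s)*(f (x (k+1)) - f xs) ≤ (k:ℝ)*(σ*s)*(f (x k) - f xs) :=
        mul_le_mul_of_nonneg_left h2 (by positivity)
      have h4 := hstep k
      push_cast
      linarith [ih, h3, h4]
  intro k hk
  have hkpos : (0:ℝ) < (k:ℝ) := by exact_mod_cast Nat.lt_of_lt_of_le Nat.zero_lt_one hk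
  have hden : (0:ℝ) < (k:ℝ) * σ * s := by positivity
  rw [le_div_iff₀ hden]
  have hD0 : D 0 = φ xs - φ (x 0) - ⟪z 0, xs - x 0⟫ := by simp only [hD]
  have h5 := hsum k
  have h6 := hDnn k
  nlinarith [h5, h6, hD0]
end

section
/- Let X, Z : (0,∞) → ℝⁿ solve the high-resolution accelerated mirror descent ODE Ż(t) = −(tσ/2)∇f(X(t)), Ẋ(t) = (2/t)∇φ*(Z(t)) − (2/t)X(t) − √s ∇f(X(t)), with X(0) = x₀, Z(0) = z₀, ∇φ*(z₀) = x₀, Ẋ(0) = 0, where s > 0. Define E(t) = t²σ[f(X(t)) − f(x*)] + 4 D_{φ*}(Z(t), z*). Then for all t > 0, E'(t) ≤ −√s · t²σ ‖∇f(X(t))‖². -/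
open Set Filter Topology
open scoped RealInnerProductSpace

lemma grad_comp_deriv {n : ℕ} (g : EuclideanSpace ℝ (Fin n) → ℝ)
    {g' : EuclideanSpace ℝ (Fin n)} {Y Y' : ℝ → EuclideanSpace ℝ (Fin n)} {t : ℝ}
    (hg : HasGradientAt g g' (Y t)) (hY : HasDerivAt Y (Y' t) t) :
    HasDerivAt (fun u => g (Y u)) ⟪g', Y' t⟫ t := by
  have h := ((hasGradientAt_iff_hasFDerivAt.mp hg).comp_hasDerivAt t hY)
  simp at h
  exact h


lemma grad_convex_ineq {n : ℕ} (f : EuclideanSpace ℝ (Fin n) → ℝ)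
    (hf : ConvexOn ℝ Set.univ f) {x a : EuclideanSpace ℝ (Fin n)}
    (hd : HasGradientAt f a x) (y : EuclideanSpace ℝ (Fin n)) :
    f x + ⟪a, y - x⟫ ≤ f y := by
  set v := y - x with hv
  have hline : ∀ τ : ℝ, HasDerivAt (fun τ : ℝ => x + τ • v) v τ := by
    intro τ
    simpa using ((hasDerivAt_id τ).smul_const v).const_add x
  have hg : HasDerivAt (fun τ : ℝ => f (x + τ • v)) ⟪a, v⟫ (0 : ℝ) := by
    have h0 : HasFDerivAt f (InnerProductSpace.toDual ℝ _ a) (x + (0:ℝ) • v) := by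
      simpa using (hasGradientAt_iff_hasFDerivAt.mp hd)
    have h := (h0.comp_hasDerivAt 0 (hline 0))
    simp at h
    exact h
  have hslope : Tendsto (slope (fun τ : ℝ => f (x + τ • v)) 0) (𝓝[>] 0) (𝓝 ⟪a, v⟫) :=
    (hasDerivAt_iff_tendsto_slope.mp hg).mono_left
      (nhdsWithin_mono 0 (by intro τ hτ; exact ne_of_gt hτ))
  have hbound : ∀ᶠ τ in 𝓝[>] (0:ℝ), slope (fun τ : ℝ => f (x + τ • v)) 0 τ ≤ f y - f x := by
    filter_upwards [Ioo_mem_nhdsGT_of_mem (by norm_num : (0:ℝ) ∈ Ico (0:ℝ) 1)] with τ hτ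
    obtain ⟨hτ0, hτ1⟩ := hτ
    have hcomb : f (x + τ • v) ≤ (1 - τ) * f x + τ * f y := by
      have := hf.2 (mem_univ x) (mem_univ y) (by linarith : (0:ℝ) ≤ 1 - τ)
        (le_of_lt hτ0) (by ring)
      have hpt : (1 - τ) • x + τ • y = x + τ • v := by
        simp [hv, smul_sub, sub_smul]; abel
      simpa [hpt, smul_eq_mul] using this
    rw [slope_def_field]
    rw [div_le_iff₀ (by linarith : (0:ℝ) < τ - 0)]
    simp only [zero_smul, add_zero]
    nlinarith
  have hle : ⟪a, v⟫ ≤ f y - f x :=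
    le_of_tendsto hslope hbound
  linarith


/-- Along the high-resolution accelerated mirror descent ODE, the Lyapunov function
`E(t) = t²σ[f(X(t)) − f(x*)] + 4D_{φ*}(Z(t), z*)` satisfies
`E'(t) ≤ −√s·t²σ‖∇f(X(t))‖²` for all `t > 0`. -/
theorem accelerated_mirror_flow_lyapunov_deriv
{n : ℕ} (f φ : EuclideanSpace ℝ (Fin n) → ℝ)
    (f' gφs : EuclideanSpace ℝ (Fin n) → EuclideanSpace ℝ (Fin n))
    (σ L s : ℝ) (hσ : 0 < σ) (hs : 0 < s)
    -- f is convex and differentiable with L-Lipschitz gradient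
    (hfconv : ConvexOn ℝ Set.univ f)
    (hfd : ∀ x, HasGradientAt f (f' x) x)
    (hfL : ∀ x y, ‖f' x - f' y‖ ≤ L * ‖x - y‖)
    -- φ is σ-strongly convex
    (hφsc : StrongConvexOn Set.univ σ φ)
    -- φ* is differentiable with gradient gφs
    (hgφs : ∀ z, HasGradientAt (fenchelConj φ) (gφs z) z)
    -- the solution of the high-resolution accelerated mirror descent ODE
    (X Z X' Z' : ℝ → EuclideanSpace ℝ (Fin n))
    (x₀ z₀ xs zs : EuclideanSpace ℝ (Fin n))
    (hX : ∀ t, 0 < t → HasDerivAt X (X' t) t)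
    (hZ : ∀ t, 0 < t → HasDerivAt Z (Z' t) t)
    (hflow₁ : ∀ t, 0 < t → Z' t = -((t * σ) / 2) • f' (X t))
    (hflow₂ : ∀ t, 0 < t →
      X' t = (2 / t) • gφs (Z t) - (2 / t) • X t - Real.sqrt s • f' (X t))
    (hX0 : X 0 = x₀) (hZ0 : Z 0 = z₀) (hx₀ : gφs z₀ = x₀) (hX'0 : X' 0 = 0)
    -- x* is a global minimizer of f and ∇φ*(z*) = x*
    (hxs : ∀ w, f xs ≤ f w) (hzs : gφs zs = xs) :
    ∀ t, 0 < t →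
      deriv (fun u => u ^ 2 * σ * (f (X u) - f xs) +
          4 * (fenchelConj φ (Z u) - fenchelConj φ zs - ⟪gφs zs, Z u - zs⟫)) t
        ≤ -(Real.sqrt s * t ^ 2 * σ) * ‖f' (X t)‖ ^ 2 := by
  intro t ht
  have htne : t ≠ 0 := ne_of_gt ht
  set a := f' (X t) with ha
  -- derivative of the first term
  have h1 : HasDerivAt (fun u : ℝ => u ^ 2 * σ) (2 * t * σ) t := by
    simpa using (hasDerivAt_pow 2 t).mul_const σ
  have h2 : HasDerivAt (fun u => f (X u)) ⟪a, X' t⟫ t :=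
    grad_comp_deriv f (hfd (X t)) (hX t ht)
  have hA : HasDerivAt (fun u => u ^ 2 * σ * (f (X u) - f xs))
      (2 * t * σ * (f (X t) - f xs) + t ^ 2 * σ * ⟪a, X' t⟫) t :=
    h1.mul (h2.sub_const (f xs))
  -- derivative of the second term
  have h3 : HasDerivAt (fun u => fenchelConj φ (Z u)) ⟪gφs (Z t), Z' t⟫ t :=
    grad_comp_deriv (fenchelConj φ) (hgφs (Z t)) (hZ t ht)
  have h4 : HasDerivAt (fun u => ⟪gφs zs, Z u - zs⟫) ⟪gφs zs, Z' t⟫ t := by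
    have := (innerSL ℝ (gφs zs)).hasFDerivAt.comp_hasDerivAt t ((hZ t ht).sub_const zs)
    simp at this
    exact this
  have hB : HasDerivAt (fun u =>
      4 * (fenchelConj φ (Z u) - fenchelConj φ zs - ⟪gφs zs, Z u - zs⟫))
      (4 * (⟪gφs (Z t), Z' t⟫ - ⟪gφs zs, Z' t⟫)) t := by
    have := ((h3.sub_const (fenchelConj φ zs)).sub h4).const_mul 4
    simpa using this
  have hE := (hA.add hB).deriv
  simp only [Pi.add_def] at hE
  rw [hE]
  -- compute the inner products
  have hXd : ⟪a, X' t⟫ = (2 / t) * ⟪a, gφs (Z t)⟫ - (2 / t) * ⟪a, X t⟫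
      - Real.sqrt s * ‖a‖ ^ 2 := by
    rw [hflow₂ t ht]
    rw [inner_sub_right, inner_sub_right, real_inner_smul_right, real_inner_smul_right,
      real_inner_smul_right, real_inner_self_eq_norm_sq]
  have hZd1 : ⟪gφs (Z t), Z' t⟫ = -((t * σ) / 2) * ⟪gφs (Z t), a⟫ := by
    rw [hflow₁ t ht, real_inner_smul_right]
  have hZd2 : ⟪gφs zs, Z' t⟫ = -((t * σ) / 2) * ⟪xs, a⟫ := by
    rw [hflow₁ t ht, real_inner_smul_right, hzs]
  -- convexity inequality
  have hconv : f (X t) + ⟪a, xs - X t⟫ ≤ f xs :=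
    grad_convex_ineq f hfconv (hfd (X t)) xs
  have hsym : ⟪gφs (Z t), a⟫ = ⟪a, gφs (Z t)⟫ := real_inner_comm _ _
  have hsym2 : ⟪xs, a⟫ = ⟪a, xs⟫ := real_inner_comm _ _
  have hsub : ⟪a, xs - X t⟫ = ⟪a, xs⟫ - ⟪a, X t⟫ := inner_sub_right _ _ _
  rw [hXd, hZd1, hZd2, hsym, hsym2]
  have key : 2 * t * σ * (f (X t) - f xs) +
      t ^ 2 * σ * (2 / t * ⟪a, gφs (Z t)⟫ - 2 / t * ⟪a, X t⟫ - Real.sqrt s * ‖a‖ ^ 2) +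
      4 * (-(t * σ / 2) * ⟪a, gφs (Z t)⟫ - -(t * σ / 2) * ⟪a, xs⟫)
      = 2 * t * σ * (f (X t) - f xs + (⟪a, xs⟫ - ⟪a, X t⟫))
        - Real.sqrt s * t ^ 2 * σ * ‖a‖ ^ 2 := by
    field_simp
    ring
  rw [key]
  have hc : f (X t) - f xs + (⟪a, xs⟫ - ⟪a, X t⟫) ≤ 0 := by
    rw [hsub] at hconv; linarith
  have hprod : 2 * t * σ * (f (X t) - f xs + (⟪a, xs⟫ - ⟪a, X t⟫)) ≤ 0 :=
    mul_nonpos_of_nonneg_of_nonpos (by positivity) hc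
  linarith
end

section
/- Let {x_k}, {z_k} be sequences in ℝⁿ generated by the unconstrained accelerated mirror descent rule: z_{k+1} = z_k − ((k+1)σs/2)∇f(x_k) and ∇φ*(z_{k+1}) = (1/2)[(k+3)x_{k+1} − (k+1)x_k + (k+1)s∇f(x_k)]. Define E(k) = (k+1)(k+2)σs[f(x_k) − f(x*)] + 4 D_{φ*}(z_{k+1}, z*). If 0 < s ≤ 1/L, then for every k ≥ 0, E(k+1) − E(k) ≤ −((k+1)(k+2)σs²/2) ‖∇f(x_k)‖². -/
open Set Filter Topology
open scoped RealInnerProductSpace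

variable {n : ℕ}

private lemma amd_grad_line {f : EuclideanSpace ℝ (Fin n) → ℝ} {g a b : EuclideanSpace ℝ (Fin n)}
    {t : ℝ} (h : HasGradientAt f g (a + t • (b - a))) :
    HasDerivAt (fun τ : ℝ => f (a + τ • (b - a))) ⟪g, b - a⟫ t := by
  have hc : HasDerivAt (fun τ : ℝ => a + τ • (b - a)) (b - a) t := by
    simpa using ((hasDerivAt_id t).smul_const (b - a)).const_add a
  have h2 := (hasGradientAt_iff_hasFDerivAt.mp h).comp_hasDerivAt t hc
  simpa [Function.comp_def, InnerProductSpace.toDual_apply_apply] using h2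

private lemma amd_convex_grad {f : EuclideanSpace ℝ (Fin n) → ℝ}
    {f' : EuclideanSpace ℝ (Fin n) → EuclideanSpace ℝ (Fin n)}
    (hfconv : ConvexOn ℝ Set.univ f) (hfd : ∀ x, HasGradientAt f (f' x) x)
    (a b : EuclideanSpace ℝ (Fin n)) : f a + ⟪f' a, b - a⟫ ≤ f b := by
  set ψ : ℝ → ℝ := fun τ => f (a + τ • (b - a)) with hψ
  have hconv : ConvexOn ℝ Set.univ ψ := by
    have h := hfconv.comp_affineMap (AffineMap.lineMap a b : ℝ →ᵃ[ℝ] EuclideanSpace ℝ (Fin n))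
    have heq : (f ∘ ⇑(AffineMap.lineMap a b : ℝ →ᵃ[ℝ] EuclideanSpace ℝ (Fin n))) = ψ := by
      funext τ
      simp [hψ, AffineMap.lineMap_apply, vsub_eq_sub, vadd_eq_add, add_comm]
    rw [heq, Set.preimage_univ] at h
    exact h
  have hd : HasDerivAt ψ ⟪f' a, b - a⟫ 0 := by
    have h0 : HasGradientAt f (f' a) (a + (0:ℝ) • (b - a)) := by simpa using hfd a
    exact amd_grad_line h0
  have hs := hconv.le_slope_of_hasDerivAt (Set.mem_univ (0:ℝ)) (Set.mem_univ 1) one_pos hd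
  have hs01 : slope ψ 0 1 = f b - f a := by
    simp [slope_def_field, hψ]
  rw [hs01] at hs
  linarith

private lemma amd_descent {f : EuclideanSpace ℝ (Fin n) → ℝ}
    {f' : EuclideanSpace ℝ (Fin n) → EuclideanSpace ℝ (Fin n)} {L : ℝ}
    (hfd : ∀ x, HasGradientAt f (f' x) x)
    (hfL : ∀ x y, ‖f' x - f' y‖ ≤ L * ‖x - y‖)
    (a b : EuclideanSpace ℝ (Fin n)) :
    f b ≤ f a + ⟪f' a, b - a⟫ + L / 2 * ‖b - a‖ ^ 2 := by
  set χ : ℝ → ℝ :=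
    fun τ => f (a + τ • (b - a)) - τ * ⟪f' a, b - a⟫ - L / 2 * τ ^ 2 * ‖b - a‖ ^ 2 with hχ
  have hd : ∀ τ : ℝ, HasDerivAt χ
      (⟪f' (a + τ • (b - a)), b - a⟫ - ⟪f' a, b - a⟫ - L * τ * ‖b - a‖ ^ 2) τ := by
    intro τ
    have h1 := amd_grad_line (hfd (a + τ • (b - a)))
    have h2 : HasDerivAt (fun τ : ℝ => τ * ⟪f' a, b - a⟫) ⟪f' a, b - a⟫ τ := by
      simpa using (hasDerivAt_id τ).mul_const (⟪f' a, b - a⟫)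
    have h3 : HasDerivAt (fun τ : ℝ => L / 2 * τ ^ 2 * ‖b - a‖ ^ 2) (L * τ * ‖b - a‖ ^ 2) τ := by
      have := ((hasDerivAt_pow 2 τ).const_mul (L / 2)).mul_const (‖b - a‖ ^ 2)
      exact this.congr_deriv (by push_cast; ring)
    exact (h1.sub h2).sub h3
  have hanti : AntitoneOn χ (Set.Icc 0 1) := by
    apply antitoneOn_of_deriv_nonpos (convex_Icc 0 1)
    · exact fun τ _ => (hd τ).continuousAt.continuousWithinAt
    · exact fun τ _ => (hd τ).differentiableAt.differentiableWithinAt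
    · intro τ hτ
      rw [interior_Icc] at hτ
      rw [(hd τ).deriv]
      have hb1 : ⟪f' (a + τ • (b - a)) - f' a, b - a⟫
          ≤ ‖f' (a + τ • (b - a)) - f' a‖ * ‖b - a‖ := real_inner_le_norm _ _
      have hb2 : ‖f' (a + τ • (b - a)) - f' a‖ ≤ L * (τ * ‖b - a‖) := by
        have := hfL (a + τ • (b - a)) a
        have he : (a + τ • (b - a)) - a = τ • (b - a) := by abel
        rw [he] at this
        rw [norm_smul] at this
        rwa [Real.norm_eq_abs, abs_of_pos hτ.1] at this
      have hb3 : ⟪f' (a + τ • (b - a)) - f' a, b - a⟫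
          = ⟪f' (a + τ • (b - a)), b - a⟫ - ⟪f' a, b - a⟫ := by
        rw [inner_sub_left]
      nlinarith [norm_nonneg (b - a), norm_nonneg (f' (a + τ • (b - a)) - f' a)]
  have hle := hanti (Set.left_mem_Icc.mpr zero_le_one) (Set.right_mem_Icc.mpr zero_le_one)
    zero_le_one
  have h0 : χ 0 = f a := by simp [hχ]
  have h1 : χ 1 = f b - ⟪f' a, b - a⟫ - L / 2 * ‖b - a‖ ^ 2 := by
    simp [hχ]
  rw [h0, h1] at hle
  linarith

private lemma amd_interp {f : EuclideanSpace ℝ (Fin n) → ℝ}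
    {f' : EuclideanSpace ℝ (Fin n) → EuclideanSpace ℝ (Fin n)} {L : ℝ} (hL : 0 < L)
    (hfconv : ConvexOn ℝ Set.univ f) (hfd : ∀ x, HasGradientAt f (f' x) x)
    (hfL : ∀ x y, ‖f' x - f' y‖ ≤ L * ‖x - y‖)
    (a b : EuclideanSpace ℝ (Fin n)) :
    f a + ⟪f' a, b - a⟫ + 1 / (2 * L) * ‖f' b - f' a‖ ^ 2 ≤ f b := by
  set d : EuclideanSpace ℝ (Fin n) := f' b - f' a with hd
  set c : EuclideanSpace ℝ (Fin n) := b - (1 / L) • d with hc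
  have h1 := amd_descent hfd hfL b c
  have h2 := amd_convex_grad hfconv hfd a c
  have hcb : c - b = -((1 / L) • d) := by rw [hc]; abel
  have hib : ⟪f' b, c - b⟫ = -(1 / L * ⟪f' b, d⟫) := by
    rw [hcb, inner_neg_right, real_inner_smul_right]
  have hnb : ‖c - b‖ ^ 2 = (1 / L) ^ 2 * ‖d‖ ^ 2 := by
    rw [hcb, norm_neg, norm_smul, mul_pow, Real.norm_eq_abs, sq_abs]
  have hca : c - a = (b - a) - (1 / L) • d := by rw [hc]; abel
  have hia : ⟪f' a, c - a⟫ = ⟪f' a, b - a⟫ - 1 / L * ⟪f' a, d⟫ := by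
    rw [hca, inner_sub_right, real_inner_smul_right]
  have hdd : ⟪f' b, d⟫ - ⟪f' a, d⟫ = ‖d‖ ^ 2 := by
    rw [← inner_sub_left, ← hd, real_inner_self_eq_norm_sq]
  rw [hib, hnb] at h1
  rw [hia] at h2
  have e1 : L / 2 * ((1 / L) ^ 2 * ‖d‖ ^ 2) = 1 / (2 * L) * ‖d‖ ^ 2 := by
    field_simp
  rw [e1] at h1
  have e3 : 1 / L * ⟪f' b, d⟫ - 1 / L * ⟪f' a, d⟫ = 1 / L * ‖d‖ ^ 2 := by
    rw [← mul_sub, hdd]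
  have e2 : 1 / L * ‖d‖ ^ 2 - 1 / (2 * L) * ‖d‖ ^ 2 = 1 / (2 * L) * ‖d‖ ^ 2 := by
    field_simp
    ring
  linarith

open Set Filter Topology
open scoped RealInnerProductSpace

variable {n : ℕ} {σ : ℝ} {φ : EuclideanSpace ℝ (Fin n) → ℝ}

private lemma amd_sc_ineq (hφsc : StrongConvexOn Set.univ σ φ)
    (a x y : EuclideanSpace ℝ (Fin n)) {t : ℝ} (ht : 0 ≤ t) (ht1 : t ≤ 1) :
    t * (⟪a, x⟫ - φ x) + (1 - t) * (⟪a, y⟫ - φ y) + σ / 2 * t * (1 - t) * ‖x - y‖ ^ 2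
      ≤ ⟪a, t • x + (1 - t) • y⟫ - φ (t • x + (1 - t) • y) := by
  have h := hφsc.2 (Set.mem_univ x) (Set.mem_univ y) (show (0:ℝ) ≤ t from ht)
    (show (0:ℝ) ≤ 1 - t by linarith) (show t + (1 - t) = 1 by ring)
  simp only [smul_eq_mul] at h
  have hin : ⟪a, t • x + (1 - t) • y⟫ = t * ⟪a, x⟫ + (1 - t) * ⟪a, y⟫ := by
    rw [inner_add_right, real_inner_smul_right, real_inner_smul_right]
  rw [hin]
  nlinarith [h]

/-- The supremum in the conjugate of a strongly convex function is attained. -/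
private lemma amd_conj_max (hσ : 0 < σ) (hφsc : StrongConvexOn Set.univ σ φ)
    (a : EuclideanSpace ℝ (Fin n)) :
    ∃ xb : EuclideanSpace ℝ (Fin n), ∀ x, ⟪a, x⟫ - φ x ≤ ⟪a, xb⟫ - φ xb := by
  set ψ : EuclideanSpace ℝ (Fin n) → ℝ := fun x => ⟪a, x⟫ - φ x with hψ
  have hφconv : ConvexOn ℝ Set.univ φ := strongConvexOn_zero.mp (hφsc.mono hσ.le)
  have hφcont : Continuous φ := by
    have h := hφconv.continuousOn isOpen_univ
    rwa [continuousOn_univ] at h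
  have hψcont : Continuous ψ := by
    apply Continuous.sub _ hφcont
    exact Continuous.inner continuous_const continuous_id
  obtain ⟨m₀, hm₀ball, hm₀max⟩ := (isCompact_closedBall (0 : EuclideanSpace ℝ (Fin n)) 1).exists_isMaxOn
    ⟨0, by simp⟩ hψcont.continuousOn
  set B := ψ m₀ with hB
  have hB0 : ψ 0 ≤ B := hm₀max (by simp)
  set R : ℝ := max 2 ((4 * (B - ψ 0) + σ) / σ) with hR
  have hR2 : (2:ℝ) ≤ R := le_max_left _ _
  obtain ⟨xb, hxbball, hxbmax⟩ := (isCompact_closedBall (0 : EuclideanSpace ℝ (Fin n)) R).exists_isMaxOn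
    ⟨0, by simpa using le_trans (by norm_num : (0:ℝ) ≤ 2) hR2⟩ hψcont.continuousOn
  refine ⟨xb, fun x => ?_⟩
  by_cases hx : ‖x‖ ≤ R
  · exact hxbmax (by simpa [Metric.mem_closedBall, dist_eq_norm] using hx)
  · push_neg at hx
    have h0mem : (0 : EuclideanSpace ℝ (Fin n)) ∈ Metric.closedBall (0 : EuclideanSpace ℝ (Fin n)) R := by
      simpa using le_trans (by norm_num : (0:ℝ) ≤ 2) hR2
    have h0le : ψ 0 ≤ ψ xb := hxbmax h0mem
    have hr0 : (0:ℝ) < ‖x‖ := by linarith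
    set r : ℝ := ‖x‖ with hr
    have ht0 : (0:ℝ) ≤ 1 / r := by positivity
    have ht1 : 1 / r ≤ 1 := by
      rw [div_le_one hr0]; linarith
    have hkey := amd_sc_ineq hφsc a x 0 ht0 ht1
    have hsm : (1 / r) • x + (1 - 1 / r) • (0 : EuclideanSpace ℝ (Fin n)) = (1 / r) • x := by
      simp
    rw [hsm] at hkey
    have hnorm1 : ‖(1 / r) • x‖ = 1 := by
      rw [norm_smul, Real.norm_eq_abs, abs_of_pos (by positivity)]
      field_simp
      exact hr.symm
    have hball : (1 / r) • x ∈ Metric.closedBall (0 : EuclideanSpace ℝ (Fin n)) 1 := by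
      rw [Metric.mem_closedBall, dist_eq_norm, sub_zero, hnorm1]
    have hle : ψ ((1 / r) • x) ≤ B := hm₀max hball
    have hx0 : ‖x - 0‖ ^ 2 = r ^ 2 := by simp [hr]
    rw [hx0] at hkey
    -- hkey : (1/r) * ψ x + (1 - 1/r) * ψ 0 + σ/2 * (1/r) * (1 - 1/r) * r^2 ≤ ψ ((1/r)•x)
    have hrne : r ≠ 0 := hr0.ne'
    have hkey3 : ψ x + (r - 1) * ψ 0 + σ / 2 * r * (r - 1) ≤ r * B := by
      have h2 := mul_le_mul_of_nonneg_left (hkey.trans hle) hr0.le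
      have hexp : r * ((1 / r) * ψ x + (1 - 1 / r) * ψ 0 + σ / 2 * (1 / r) * (1 - 1 / r) * r ^ 2)
          = ψ x + (r - 1) * ψ 0 + σ / 2 * r * (r - 1) := by
        field_simp
      rw [hexp] at h2
      linarith
    have hσr : 4 * (B - ψ 0) + σ ≤ σ * r := by
      have h3 : (4 * (B - ψ 0) + σ) / σ ≤ R := le_max_right _ _
      have h4 : R ≤ r := hx.le
      rw [div_le_iff₀ hσ] at h3
      nlinarith
    clear_value ψ B R r
    have hfin : ψ x ≤ ψ 0 := by
      nlinarith [mul_nonneg (by linarith : (0:ℝ) ≤ σ * r - σ - 4 * (B - ψ 0))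
        (by linarith : (0:ℝ) ≤ r), mul_nonneg (by linarith : (0:ℝ) ≤ B - ψ 0)
        (by linarith : (0:ℝ) ≤ r)]
    have hfin2 : ψ x ≤ ψ xb := le_trans hfin h0le
    simpa [hψ] using hfin2
private lemma amd_conj_smooth (hσ : 0 < σ) (hφsc : StrongConvexOn Set.univ σ φ)
    (gφs : EuclideanSpace ℝ (Fin n) → EuclideanSpace ℝ (Fin n))
    (hgφs : ∀ z, HasGradientAt (fenchelConj φ) (gφs z) z)
    (a b : EuclideanSpace ℝ (Fin n)) :
    fenchelConj φ b ≤ fenchelConj φ a + ⟪gφs a, b - a⟫ + 1 / (2 * σ) * ‖b - a‖ ^ 2 := by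
  obtain ⟨xb, hxb⟩ := amd_conj_max hσ hφsc a
  have hbdd : ∀ c : EuclideanSpace ℝ (Fin n),
      BddAbove (Set.range fun x : EuclideanSpace ℝ (Fin n) => ⟪c, x⟫ - φ x) := by
    intro c
    obtain ⟨xc, hxc⟩ := amd_conj_max hσ hφsc c
    exact ⟨⟪c, xc⟫ - φ xc, by rintro v ⟨x, rfl⟩; exact hxc x⟩
  have hval : fenchelConj φ a = ⟪a, xb⟫ - φ xb :=
    le_antisymm (ciSup_le hxb) (le_ciSup (hbdd a) xb)
  have hlow : ∀ (c x : EuclideanSpace ℝ (Fin n)), ⟪c, x⟫ - φ x ≤ fenchelConj φ c :=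
    fun c x => le_ciSup (hbdd c) x
  have hstrong : ∀ y : EuclideanSpace ℝ (Fin n),
      (⟪a, y⟫ - φ y) + σ / 2 * ‖y - xb‖ ^ 2 ≤ ⟪a, xb⟫ - φ xb := by
    intro y
    have hQ : ∀ m : ℕ, (⟪a, y⟫ - φ y) + σ / 2 * (1 - 1 / ((m : ℝ) + 2)) * ‖y - xb‖ ^ 2
        ≤ ⟪a, xb⟫ - φ xb := by
      intro m
      have hm2 : (0 : ℝ) < (m : ℝ) + 2 := by positivity
      set t : ℝ := 1 / ((m : ℝ) + 2) with htdef
      have ht0 : 0 < t := by positivity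
      have ht1 : t ≤ 1 := by rw [htdef, div_le_one hm2]; linarith
      have hk := amd_sc_ineq hφsc a y xb ht0.le ht1
      have hub := hxb (t • y + (1 - t) • xb)
      have h3 : t * ((⟪a, y⟫ - φ y) + σ / 2 * (1 - t) * ‖y - xb‖ ^ 2)
          ≤ t * (⟪a, xb⟫ - φ xb) := by nlinarith [le_trans hk hub]
      exact (mul_le_mul_iff_right₀ ht0).mp h3
    have h1 : Tendsto (fun m : ℕ => ((m : ℝ) + 2)) atTop atTop :=
      tendsto_atTop_add_const_right _ 2 tendsto_natCast_atTop_atTop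
    have h2 : Tendsto (fun m : ℕ => 1 / ((m : ℝ) + 2)) atTop (𝓝 0) := by
      simpa [one_div, Pi.inv_def] using h1.inv_tendsto_atTop
    have hT : Tendsto (fun m : ℕ =>
        (⟪a, y⟫ - φ y) + σ / 2 * (1 - 1 / ((m : ℝ) + 2)) * ‖y - xb‖ ^ 2) atTop
        (𝓝 ((⟪a, y⟫ - φ y) + σ / 2 * (1 - 0) * ‖y - xb‖ ^ 2)) := by
      exact Tendsto.const_add _ ((((h2.const_sub 1).const_mul (σ / 2)).mul_const _))
    have := le_of_tendsto hT (Filter.Eventually.of_forall hQ)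
    simpa using this
  have hgeq : gφs a = xb := by
    set M := InnerProductSpace.toDual ℝ (EuclideanSpace ℝ (Fin n)) xb with hM
    set F : EuclideanSpace ℝ (Fin n) → ℝ := fun c => fenchelConj φ c - M c with hF
    have hmin : IsLocalMin F a := by
      refine Filter.Eventually.of_forall fun c => ?_
      have h := hlow c xb
      have h2 : M c = ⟪xb, c⟫ := InnerProductSpace.toDual_apply_apply
      have h3 : M a = ⟪xb, a⟫ := InnerProductSpace.toDual_apply_apply
      have h4 : ⟪c, xb⟫ = ⟪xb, c⟫ := real_inner_comm _ _
      have h5 : ⟪a, xb⟫ = ⟪xb, a⟫ := real_inner_comm _ _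
      simp only [hF]
      rw [h2, h3]
      rw [hval] at *
      linarith [hlow c xb]
    have hdF : HasFDerivAt F
        (InnerProductSpace.toDual ℝ (EuclideanSpace ℝ (Fin n)) (gφs a) - M) a :=
      (hasGradientAt_iff_hasFDerivAt.mp (hgφs a)).sub M.hasFDerivAt
    have hz := hmin.hasFDerivAt_eq_zero hdF
    have hz2 : InnerProductSpace.toDual ℝ (EuclideanSpace ℝ (Fin n)) (gφs a) = M :=
      sub_eq_zero.mp hz
    exact (InnerProductSpace.toDual ℝ (EuclideanSpace ℝ (Fin n))).injective (by rw [hz2, hM])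
  rw [hgeq]
  apply ciSup_le
  intro x
  have h1 := hstrong x
  have h2 : ⟪b, x⟫ = ⟪a, x⟫ + ⟪b - a, x⟫ := by rw [inner_sub_left]; ring
  have h3 : ⟪b - a, x⟫ = ⟪b - a, xb⟫ + ⟪b - a, x - xb⟫ := by
    rw [← inner_add_right, add_sub_cancel]
  have hyoung : ⟪b - a, x - xb⟫ ≤ 1 / (2 * σ) * ‖b - a‖ ^ 2 + σ / 2 * ‖x - xb‖ ^ 2 := by
    have hcs := real_inner_le_norm (b - a) (x - xb)
    have h4 : σ * ⟪b - a, x - xb⟫ ≤ σ * (‖b - a‖ * ‖x - xb‖) :=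
      mul_le_mul_of_nonneg_left hcs hσ.le
    have h5 : ⟪b - a, x - xb⟫ ≤ (‖b - a‖ ^ 2 + σ ^ 2 * ‖x - xb‖ ^ 2) / (2 * σ) := by
      rw [le_div_iff₀ (by positivity)]
      nlinarith [sq_nonneg (‖b - a‖ - σ * ‖x - xb‖)]
    have h6 : (‖b - a‖ ^ 2 + σ ^ 2 * ‖x - xb‖ ^ 2) / (2 * σ)
        = 1 / (2 * σ) * ‖b - a‖ ^ 2 + σ / 2 * ‖x - xb‖ ^ 2 := by
      field_simp
    linarith [h5, h6 ▸ h5]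
  have h7 : ⟪xb, b - a⟫ = ⟪b - a, xb⟫ := real_inner_comm _ _
  rw [hval, h7]
  linarith
/-- For unconstrained accelerated mirror descent with `0 < s ≤ 1/L`, the Lyapunov function
`E(k) = (k+1)(k+2)σs[f(x_k) − f(x*)] + 4D_{φ*}(z_{k+1}, z*)` satisfies
`E(k+1) − E(k) ≤ −((k+1)(k+2)σs²/2)‖∇f(x_k)‖²`. -/
theorem accelerated_mirror_descent_lyapunov_difference
{n : ℕ} (f φ : EuclideanSpace ℝ (Fin n) → ℝ)
    (f' gφs : EuclideanSpace ℝ (Fin n) → EuclideanSpace ℝ (Fin n))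
    (σ L s : ℝ) (hσ : 0 < σ)
    -- f is convex and differentiable with L-Lipschitz gradient
    (hfconv : ConvexOn ℝ Set.univ f)
    (hfd : ∀ x, HasGradientAt f (f' x) x)
    (hfL : ∀ x y, ‖f' x - f' y‖ ≤ L * ‖x - y‖)
    -- φ is σ-strongly convex
    (hφsc : StrongConvexOn Set.univ σ φ)
    -- φ* is differentiable with gradient gφs
    (hgφs : ∀ z, HasGradientAt (fenchelConj φ) (gφs z) z)
    -- the unconstrained accelerated mirror descent iteration
    (x z : ℕ → EuclideanSpace ℝ (Fin n))
    (hz : ∀ k : ℕ, z (k + 1) = z k - ((((k : ℝ) + 1) * σ * s) / 2) • f' (x k))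
    (hxz : ∀ k : ℕ, gφs (z (k + 1)) =
      (1 / 2 : ℝ) • ((((k : ℝ) + 3)) • x (k + 1) - (((k : ℝ) + 1)) • x k +
        ((((k : ℝ) + 1)) * s) • f' (x k)))
    -- x* is a global minimizer of f and ∇φ*(z*) = x*
    (xs zs : EuclideanSpace ℝ (Fin n))
    (hxs : ∀ w, f xs ≤ f w) (hzs : gφs zs = xs)
    (hs : 0 < s) (hsL : s ≤ 1 / L) :
    ∀ k : ℕ,
      ((((k : ℝ) + 2) * ((k : ℝ) + 3)) * σ * s * (f (x (k + 1)) - f xs) +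
          4 * (fenchelConj φ (z (k + 2)) - fenchelConj φ zs - ⟪gφs zs, z (k + 2) - zs⟫)) -
        ((((k : ℝ) + 1) * ((k : ℝ) + 2)) * σ * s * (f (x k) - f xs) +
          4 * (fenchelConj φ (z (k + 1)) - fenchelConj φ zs - ⟪gφs zs, z (k + 1) - zs⟫))
        ≤ -((((k : ℝ) + 1) * ((k : ℝ) + 2) * σ * s ^ 2) / 2) * ‖f' (x k)‖ ^ 2 := by
  -- L is positive
  have hL : 0 < L := by
    by_contra hc
    push_neg at hc
    have h1 : 1 / L ≤ 0 := by
      rcases lt_or_eq_of_le hc with h | h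
      · exact le_of_lt (div_neg_of_pos_of_neg one_pos h)
      · rw [h]; norm_num
    linarith
  have hhalf : s / 2 ≤ 1 / (2 * L) := by
    have h2 : 1 / L / 2 = 1 / (2 * L) := by ring
    linarith
  -- the gradient of f vanishes at the minimizer
  have hg0 : f' xs = 0 := by
    have hmin : IsLocalMin f xs := Filter.Eventually.of_forall hxs
    have hz0 := hmin.hasFDerivAt_eq_zero (hasGradientAt_iff_hasFDerivAt.mp (hfd xs))
    have : InnerProductSpace.toDual ℝ (EuclideanSpace ℝ (Fin n)) (f' xs)
        = InnerProductSpace.toDual ℝ (EuclideanSpace ℝ (Fin n)) 0 := by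
      rw [map_zero]; exact hz0
    exact (InnerProductSpace.toDual ℝ (EuclideanSpace ℝ (Fin n))).injective this
  intro k
  -- the mirror step between z (k+1) and z (k+2)
  have hzz : z (k + 2) - z (k + 1) = -((((k : ℝ) + 1 + 1) * σ * s / 2) • f' (x (k + 1))) := by
    have h0 : z (k + 2) = z (k + 1) - ((((k : ℝ) + 1 + 1) * σ * s / 2) • f' (x (k + 1))) := by
      have h1 := hz (k + 1)
      push_cast at h1
      exact h1
    rw [h0]
    exact sub_sub_cancel_left _ _
  have s1 : ⟪gφs (z (k + 1)), z (k + 2) - z (k + 1)⟫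
      = -(((k : ℝ) + 1 + 1) * σ * s / 2 * ⟪gφs (z (k + 1)), f' (x (k + 1))⟫) := by
    rw [hzz, inner_neg_right, real_inner_smul_right]
  have s2 : ‖z (k + 2) - z (k + 1)‖ ^ 2
      = (((k : ℝ) + 1 + 1) * σ * s / 2) ^ 2 * ‖f' (x (k + 1))‖ ^ 2 := by
    rw [hzz, norm_neg, norm_smul, mul_pow, Real.norm_eq_abs, sq_abs]
  have s3 : ⟪gφs zs, z (k + 2) - zs⟫ - ⟪gφs zs, z (k + 1) - zs⟫
      = -(((k : ℝ) + 1 + 1) * σ * s / 2 * ⟪xs, f' (x (k + 1))⟫) := by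
    rw [hzs, ← inner_sub_right, sub_sub_sub_cancel_right, hzz, inner_neg_right,
      real_inner_smul_right]
  -- the inner product of the mirror point with the new gradient
  have hw : ⟪gφs (z (k + 1)), f' (x (k + 1))⟫
      = (1 / 2 : ℝ) * (((k : ℝ) + 3) * ⟪x (k + 1), f' (x (k + 1))⟫
        - ((k : ℝ) + 1) * ⟪x k, f' (x (k + 1))⟫ + ((k : ℝ) + 1) * s * ⟪f' (x k), f' (x (k + 1))⟫) := by
    have h1 := congrArg (fun v => (⟪v, f' (x (k + 1))⟫ : ℝ)) (hxz k)
    simp only [inner_sub_left, inner_add_left, real_inner_smul_left] at h1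
    linarith [h1]
  -- smoothness of the conjugate
  have hIA := amd_conj_smooth hσ hφsc gφs hgφs (z (k + 1)) (z (k + 2))
  rw [s1, s2, hw] at hIA
  have e1 : 1 / (2 * σ) * ((((k : ℝ) + 1 + 1) * σ * s / 2) ^ 2 * ‖f' (x (k + 1))‖ ^ 2)
      = ((k : ℝ) + 1 + 1) ^ 2 * σ * s ^ 2 / 8 * ‖f' (x (k + 1))‖ ^ 2 := by
    field_simp
    ring
  rw [e1] at hIA
  -- interpolation inequality towards the minimizer
  have hIB := amd_interp hL hfconv hfd hfL (x (k + 1)) xs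
  rw [hg0] at hIB
  have eIB : ⟪f' (x (k + 1)), xs - x (k + 1)⟫
      = ⟪xs, f' (x (k + 1))⟫ - ⟪x (k + 1), f' (x (k + 1))⟫ := by
    rw [inner_sub_right, real_inner_comm (f' (x (k + 1))) xs,
      real_inner_comm (f' (x (k + 1))) (x (k + 1))]
  rw [eIB] at hIB
  simp only [zero_sub, norm_neg] at hIB
  have hIB2 : f (x (k + 1)) + (⟪xs, f' (x (k + 1))⟫ - ⟪x (k + 1), f' (x (k + 1))⟫)
      + s / 2 * ‖f' (x (k + 1))‖ ^ 2 ≤ f xs := by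
    have hm := mul_le_mul_of_nonneg_right hhalf (sq_nonneg ‖f' (x (k + 1))‖)
    linarith
  -- interpolation inequality between consecutive iterates
  have hIC := amd_interp hL hfconv hfd hfL (x (k + 1)) (x k)
  have eIC : ⟪f' (x (k + 1)), x k - x (k + 1)⟫
      = ⟪x k, f' (x (k + 1))⟫ - ⟪x (k + 1), f' (x (k + 1))⟫ := by
    rw [inner_sub_right, real_inner_comm (f' (x (k + 1))) (x k),
      real_inner_comm (f' (x (k + 1))) (x (k + 1))]
  rw [eIC] at hIC
  have eN : ‖f' (x k) - f' (x (k + 1))‖ ^ 2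
      = ‖f' (x k)‖ ^ 2 - 2 * ⟪f' (x k), f' (x (k + 1))⟫ + ‖f' (x (k + 1))‖ ^ 2 :=
    norm_sub_sq_real _ _
  rw [eN] at hIC
  have hnn : (0:ℝ) ≤ ‖f' (x k)‖ ^ 2 - 2 * ⟪f' (x k), f' (x (k + 1))⟫ + ‖f' (x (k + 1))‖ ^ 2 := by
    rw [← eN]; positivity
  have hIC2 : f (x (k + 1)) + (⟪x k, f' (x (k + 1))⟫ - ⟪x (k + 1), f' (x (k + 1))⟫)
      + s / 2 * (‖f' (x k)‖ ^ 2 - 2 * ⟪f' (x k), f' (x (k + 1))⟫ + ‖f' (x (k + 1))‖ ^ 2)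
      ≤ f (x k) := by
    have hm := mul_le_mul_of_nonneg_right hhalf hnn
    linarith
  -- combine everything
  have cB : (0:ℝ) ≤ 2 * ((k : ℝ) + 2) * σ * s := by positivity
  have cC : (0:ℝ) ≤ ((k : ℝ) + 1) * (((k : ℝ)) + 2) * σ * s := by positivity
  have mIB := mul_le_mul_of_nonneg_left hIB2 cB
  have mIC := mul_le_mul_of_nonneg_left hIC2 cC
  have hres : (0:ℝ) ≤ ((k : ℝ) + 2) * σ * s ^ 2 / 2 * ‖f' (x (k + 1))‖ ^ 2 := by positivity
  linarith [hIA, mIB, mIC, s3, hres]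
end

section
/- Let {x_k}, {z_k} be sequences in ℝⁿ generated by the unconstrained accelerated mirror descent rule: z_{k+1} = z_k − ((k+1)σs/2)∇f(x_k) and ∇φ*(z_{k+1}) = (1/2)[(k+3)x_{k+1} − (k+1)x_k + (k+1)s∇f(x_k)]. If 0 < s ≤ 1/L, then for every k ≥ 0, f(x_k) − f(x*) ≤ (2σs[f(x₀) − f(x*)] + 4 D_{φ*}(z₁, z*)) / ((k+1)(k+2)σs). -/
open Set Filter Topology
open scoped RealInnerProductSpace

section AMDAux

variable {n : ℕ}

local notation "E" => EuclideanSpace ℝ (Fin n)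

lemma hasGradientAt_const_inner (c x : E) : HasGradientAt (fun y : E => ⟪c, y⟫) c x := by
  rw [hasGradientAt_iff_hasFDerivAt]
  exact (InnerProductSpace.toDual ℝ (EuclideanSpace ℝ (Fin n)) c).hasFDerivAt

lemma convex_grad_ineq (f : EuclideanSpace ℝ (Fin n) → ℝ) (f' : EuclideanSpace ℝ (Fin n) → EuclideanSpace ℝ (Fin n))
    (hfconv : ConvexOn ℝ Set.univ f) (hfd : ∀ x, HasGradientAt f (f' x) x) (x y : E) :
    f x + ⟪f' x, y - x⟫ ≤ f y := by
  have hc : ∀ t : ℝ, HasDerivAt (fun t : ℝ => x + t • (y - x)) (y - x) t := by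
    intro t
    simpa using ((hasDerivAt_id t).smul_const (y - x)).const_add x
  have hg : HasDerivAt (fun t : ℝ => f (x + t • (y - x))) ⟪f' x, y - x⟫ 0 := by
    have h := ((hfd (x + (0:ℝ) • (y - x))).hasFDerivAt.comp_hasDerivAt 0 (hc 0))
    simpa [InnerProductSpace.toDual_apply_apply, Function.comp_def] using h
  have hslope := hasDerivAt_iff_tendsto_slope.1 hg
  have hslope' : Tendsto (slope (fun t : ℝ => f (x + t • (y - x))) 0) (𝓝[>] (0:ℝ))
      (𝓝 ⟪f' x, y - x⟫) :=
    hslope.mono_left (nhdsWithin_mono _ (fun t ht => ne_of_gt ht))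
  have hev : ∀ᶠ t in 𝓝[>] (0:ℝ), slope (fun t : ℝ => f (x + t • (y - x))) 0 t ≤ f y - f x := by
    filter_upwards [Ioo_mem_nhdsGT_of_mem (by norm_num : (0:ℝ) ∈ Ico (0:ℝ) 1)] with t ht
    have hcomb := hfconv.2 (mem_univ y) (mem_univ x) (le_of_lt ht.1) (by linarith [ht.2] : (0:ℝ) ≤ 1 - t) (by ring)
    have hpt : x + t • (y - x) = t • y + (1 - t) • x := by module
    rw [slope_def_field]
    have : f (x + t • (y - x)) ≤ t * f y + (1 - t) * f x := by rw [hpt]; simpa using hcomb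
    simp only [sub_zero, zero_smul, add_zero]
    rw [div_le_iff₀ ht.1]
    nlinarith [ht.1]
  have := le_of_tendsto hslope' hev
  linarith

lemma descent_lemma (f : EuclideanSpace ℝ (Fin n) → ℝ)
    (f' : EuclideanSpace ℝ (Fin n) → EuclideanSpace ℝ (Fin n)) (L : ℝ)
    (hfd : ∀ x, HasGradientAt f (f' x) x)
    (hfL : ∀ x y, ‖f' x - f' y‖ ≤ L * ‖x - y‖) (x y : E) :
    f y ≤ f x + ⟪f' x, y - x⟫ + L / 2 * ‖y - x‖ ^ 2 := by
  have hc : ∀ t : ℝ, HasDerivAt (fun t : ℝ => x + t • (y - x)) (y - x) t := by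
    intro t
    simpa using ((hasDerivAt_id t).smul_const (y - x)).const_add x
  have hg : ∀ t : ℝ, HasDerivAt (fun t : ℝ => f (x + t • (y - x)))
      ⟪f' (x + t • (y - x)), y - x⟫ t := by
    intro t
    have h := ((hfd (x + t • (y - x))).hasFDerivAt.comp_hasDerivAt t (hc t))
    simpa [InnerProductSpace.toDual_apply_apply, Function.comp_def] using h
  set F : ℝ → ℝ := fun t => f x + t * ⟪f' x, y - x⟫ + L / 2 * t ^ 2 * ‖y - x‖ ^ 2
      - f (x + t • (y - x)) with hF
  have hF' : ∀ t : ℝ, HasDerivAt F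
      (⟪f' x, y - x⟫ + L / 2 * (2 * t) * ‖y - x‖ ^ 2 - ⟪f' (x + t • (y - x)), y - x⟫) t := by
    intro t
    have h1 : HasDerivAt (fun t : ℝ => t * ⟪f' x, y - x⟫) ⟪f' x, y - x⟫ t := by
      simpa using (hasDerivAt_id t).mul_const ⟪f' x, y - x⟫
    have h2 : HasDerivAt (fun t : ℝ => L / 2 * t ^ 2 * ‖y - x‖ ^ 2)
        (L / 2 * (2 * t) * ‖y - x‖ ^ 2) t := by
      have := ((hasDerivAt_pow 2 t).const_mul (L / 2)).mul_const (‖y - x‖ ^ 2)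
      simpa [pow_one] using this
    exact ((h1.const_add (f x)).add h2).sub (hg t)
  have hderiv : ∀ t : ℝ, t ∈ Ioo (0:ℝ) 1 → 0 ≤ deriv F t := by
    intro t ht
    rw [(hF' t).deriv]
    have hnorm : ‖f' (x + t • (y - x)) - f' x‖ ≤ L * (t * ‖y - x‖) := by
      have := hfL (x + t • (y - x)) x
      have he : x + t • (y - x) - x = t • (y - x) := by abel
      rw [he] at this
      rwa [norm_smul, Real.norm_eq_abs, abs_of_pos ht.1] at this
    have hinner : ⟪f' (x + t • (y - x)), y - x⟫ - ⟪f' x, y - x⟫ ≤ L * t * ‖y - x‖ ^ 2 := by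
      have h1 : ⟪f' (x + t • (y - x)) - f' x, y - x⟫ ≤ ‖f' (x + t • (y - x)) - f' x‖ * ‖y - x‖ :=
        real_inner_le_norm _ _
      rw [inner_sub_left] at h1
      nlinarith [norm_nonneg (y - x), mul_le_mul_of_nonneg_right hnorm (norm_nonneg (y - x))]
    linarith
  have hmono : MonotoneOn F (Icc (0:ℝ) 1) := by
    apply monotoneOn_of_deriv_nonneg (convex_Icc 0 1)
    · exact fun t _ => ((hF' t).continuousAt).continuousWithinAt
    · intro t ht
      exact ((hF' t).differentiableAt).differentiableWithinAt
    · intro t ht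
      rw [interior_Icc] at ht
      exact hderiv t ht
  have h01 := hmono (by norm_num : (0:ℝ) ∈ Icc (0:ℝ) 1) (by norm_num : (1:ℝ) ∈ Icc (0:ℝ) 1)
    (by norm_num)
  have hF0 : F 0 = 0 := by simp [hF]
  have hF1 : F 1 = f x + ⟪f' x, y - x⟫ + L / 2 * ‖y - x‖ ^ 2 - f y := by
    simp [hF]
  rw [hF0, hF1] at h01
  linarith

lemma cocoercivity (f : EuclideanSpace ℝ (Fin n) → ℝ)
    (f' : EuclideanSpace ℝ (Fin n) → EuclideanSpace ℝ (Fin n)) (L : ℝ) (hL : 0 < L)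
    (hfconv : ConvexOn ℝ Set.univ f) (hfd : ∀ x, HasGradientAt f (f' x) x)
    (hfL : ∀ x y, ‖f' x - f' y‖ ≤ L * ‖x - y‖) (x y : E) :
    f x + ⟪f' x, y - x⟫ + 1 / (2 * L) * ‖f' y - f' x‖ ^ 2 ≤ f y := by
  set q : EuclideanSpace ℝ (Fin n) → ℝ := fun w => f w - ⟪f' x, w⟫ with hq
  set q' : EuclideanSpace ℝ (Fin n) → EuclideanSpace ℝ (Fin n) := fun w => f' w - f' x with hq'
  have hqd : ∀ w, HasGradientAt q (q' w) w := by
    intro w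
    have h1 := (hfd w).hasFDerivAt
    have h2 := (hasGradientAt_const_inner (f' x) w).hasFDerivAt
    have := h1.sub h2
    rw [hasGradientAt_iff_hasFDerivAt, map_sub]
    exact this
  have hqL : ∀ a b, ‖q' a - q' b‖ ≤ L * ‖a - b‖ := by
    intro a b
    have : q' a - q' b = f' a - f' b := sub_sub_sub_cancel_right _ _ _
    rw [this]; exact hfL a b
  have hqconv : ConvexOn ℝ Set.univ q := by
    refine ⟨convex_univ, fun w _ v _ a b ha hb hab => ?_⟩
    have hf := hfconv.2 (mem_univ w) (mem_univ v) ha hb hab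
    simp only [hq, smul_eq_mul, inner_add_right, real_inner_smul_right] at *
    linarith
  have hqmin : ∀ w, q x ≤ q w := by
    intro w
    have := convex_grad_ineq q q' hqconv hqd x w
    have hz : q' x = 0 := by simp [hq']
    rw [hz] at this
    simpa using this
  set v : EuclideanSpace ℝ (Fin n) := y - (1 / L) • (q' y) with hv
  have h1 : q x ≤ q v := hqmin v
  have h2 : q v ≤ q y + ⟪q' y, v - y⟫ + L / 2 * ‖v - y‖ ^ 2 :=
    descent_lemma q q' L hqd hqL y v
  have hvy : v - y = -((1 / L) • (q' y)) := by rw [hv]; abel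
  have hi : ⟪q' y, v - y⟫ = -(1 / L) * ‖q' y‖ ^ 2 := by
    rw [hvy, inner_neg_right, real_inner_smul_right, real_inner_self_eq_norm_sq]
    ring
  have hn : ‖v - y‖ ^ 2 = (1 / L) ^ 2 * ‖q' y‖ ^ 2 := by
    rw [hvy, norm_neg, norm_smul, Real.norm_eq_abs, mul_pow, sq_abs]
  rw [hi, hn] at h2
  have hL' : L ≠ 0 := ne_of_gt hL
  have hqx : q x = f x - ⟪f' x, x⟫ := rfl
  have hqy : q y = f y - ⟪f' x, y⟫ := rfl
  have hq'y : ‖q' y‖ ^ 2 = ‖f' y - f' x‖ ^ 2 := rfl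
  clear_value q q' v
  have key : q x ≤ q y - 1 / (2 * L) * ‖q' y‖ ^ 2 := by
    have e : L / 2 * ((1 / L) ^ 2 * ‖q' y‖ ^ 2) - (1 / L) * ‖q' y‖ ^ 2
        = -(1 / (2 * L)) * ‖q' y‖ ^ 2 := by
      field_simp
      ring
    linarith [h1, h2, e]
  have hsub : ⟪f' x, y - x⟫ = ⟪f' x, y⟫ - ⟪f' x, x⟫ := by rw [inner_sub_right]
  rw [hqx, hqy, hq'y] at key
  linarith

lemma exists_argmax (φ : EuclideanSpace ℝ (Fin n) → ℝ) (σ : ℝ) (hσ : 0 < σ)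
    (hφsc : StrongConvexOn Set.univ σ φ) (z : E) :
    ∃ p : E, ∀ y : E, ⟪z, y⟫ - φ y ≤ ⟪z, p⟫ - φ p := by
  have hφconv : ConvexOn ℝ Set.univ φ := hφsc.convexOn (fun r => by positivity)
  have hφcont : Continuous φ := by
    rw [← continuousOn_univ]
    exact hφconv.continuousOn isOpen_univ
  have hhcont : Continuous (fun y : E => ⟪z, y⟫ - φ y) :=
    (continuous_const.inner continuous_id).sub hφcont
  obtain ⟨w₀, hw₀mem, hw₀⟩ := (isCompact_closedBall (0:E) 1).exists_isMinOn
    ⟨0, by simp⟩ hφcont.continuousOn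
  set m : ℝ := φ w₀ with hm
  set R : ℝ := max 1 ((‖z‖ - m + φ 0 + σ / 2) * (2 / σ)) with hR
  have hR1 : (1:ℝ) ≤ R := le_max_left _ _
  obtain ⟨p, hpmem, hpmax⟩ := (isCompact_closedBall (0:E) R).exists_isMaxOn
    ⟨0, by simp [Metric.mem_closedBall]; linarith⟩ hhcont.continuousOn
  refine ⟨p, fun y => ?_⟩
  by_cases hy : ‖y‖ ≤ R
  · exact hpmax (by simpa [Metric.mem_closedBall, dist_zero_right] using hy)
  · push_neg at hy
    have h0p : ⟪z, (0:E)⟫ - φ 0 ≤ ⟪z, p⟫ - φ p := hpmax (by simp [Metric.mem_closedBall]; linarith)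
    have hyR : (1:ℝ) < ‖y‖ := lt_of_le_of_lt hR1 hy
    have hy0 : (0:ℝ) < ‖y‖ := by linarith
    have hrne : ‖y‖ ≠ 0 := ne_of_gt hy0
    set t : ℝ := ‖y‖⁻¹ with ht
    have ht0 : 0 < t := by positivity
    have ht1 : t ≤ 1 := by
      rw [ht, inv_le_one_iff₀]; right; linarith
    have hb : (0:ℝ) ≤ 1 - t := by linarith
    have hab : t + (1 - t) = 1 := by ring
    have hsc := hφsc.2 (mem_univ y) (mem_univ (0:E)) (le_of_lt ht0) hb hab
    simp only [smul_zero, add_zero, sub_zero, smul_eq_mul] at hsc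
    have hmem1 : t • y ∈ Metric.closedBall (0:E) 1 := by
      rw [Metric.mem_closedBall, dist_zero_right, norm_smul, Real.norm_eq_abs,
        abs_of_pos ht0, ht, inv_mul_cancel₀ hrne]
    have hunit : m ≤ φ (t • y) := hw₀ hmem1
    have hips : ⟪z, y⟫ ≤ ‖z‖ * ‖y‖ := real_inner_le_norm z y
    have hz0 : ⟪z, (0:E)⟫ = (0:ℝ) := inner_zero_right z
    rw [hz0] at h0p
    have hφy : ‖y‖ * m - (‖y‖ - 1) * φ 0 + σ / 2 * (‖y‖ ^ 2 - ‖y‖) ≤ φ y := by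
      have h1 : m ≤ t * φ y + (1 - t) * φ 0 - t * (1 - t) * (σ / 2 * ‖y‖ ^ 2) := by
        linarith [hunit, hsc]
      rw [ht] at h1
      have h2 := mul_le_mul_of_nonneg_left h1 (le_of_lt hy0)
      have e2 : ‖y‖ * (‖y‖⁻¹ * φ y + (1 - ‖y‖⁻¹) * φ 0 - ‖y‖⁻¹ * (1 - ‖y‖⁻¹) * (σ / 2 * ‖y‖ ^ 2))
          = φ y + (‖y‖ - 1) * φ 0 - σ / 2 * (‖y‖ ^ 2 - ‖y‖) := by
        field_simp
      rw [e2] at h2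
      linarith
    have hRy : (‖z‖ - m + φ 0 + σ / 2) * (2 / σ) ≤ ‖y‖ :=
      le_of_lt (lt_of_le_of_lt (le_max_right _ _) hy)
    have hkey : ‖y‖ * (‖z‖ - m + φ 0 + σ / 2) ≤ σ / 2 * ‖y‖ ^ 2 := by
      have h3 := mul_le_mul_of_nonneg_left (mul_le_mul_of_nonneg_left hRy (le_of_lt hy0))
        (by positivity : (0:ℝ) ≤ σ / 2)
      have e5 : σ / 2 * (‖y‖ * ((‖z‖ - m + φ 0 + σ / 2) * (2 / σ)))
          = ‖y‖ * (‖z‖ - m + φ 0 + σ / 2) := by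
        field_simp
      rw [e5] at h3
      nlinarith [h3]
    have hfin : ⟪z, y⟫ - φ y ≤ 0 - φ 0 := by nlinarith [hips, hφy, hkey]
    linarith [h0p, hfin]

lemma argmax_subgrad (φ : EuclideanSpace ℝ (Fin n) → ℝ) (σ : ℝ) (hσ : 0 < σ)
    (hφsc : StrongConvexOn Set.univ σ φ) (z p : E)
    (hp : ∀ y : E, ⟪z, y⟫ - φ y ≤ ⟪z, p⟫ - φ p) (y : E) :
    φ p + ⟪z, y - p⟫ + σ / 2 * ‖y - p‖ ^ 2 ≤ φ y := by
  have key : ∀ t : ℝ, t ∈ Ioo (0:ℝ) 1 →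
      ⟪z, y - p⟫ + σ / 2 * ‖y - p‖ ^ 2 - t * (σ / 2 * ‖y - p‖ ^ 2) ≤ φ y - φ p := by
    intro t ht
    have hb : (0:ℝ) ≤ 1 - t := by linarith [ht.2]
    have hab : t + (1 - t) = 1 := by ring
    have hsc := hφsc.2 (mem_univ y) (mem_univ p) (le_of_lt ht.1) hb hab
    simp only [smul_eq_mul] at hsc
    have hmax := hp (t • y + (1 - t) • p)
    have hip : ⟪z, t • y + (1 - t) • p⟫ = t * ⟪z, y⟫ + (1 - t) * ⟪z, p⟫ := by
      rw [inner_add_right, real_inner_smul_right, real_inner_smul_right]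
    rw [hip] at hmax
    -- t * ⟪z, y - p⟫ ≤ φ(..) - φ p ≤ t (φ y - φ p) - t(1-t) σ/2 ‖y-p‖²
    have hsplit : ⟪z, y - p⟫ = ⟪z, y⟫ - ⟪z, p⟫ := inner_sub_right z y p
    have hcomb : t * (⟪z, y⟫ - ⟪z, p⟫) ≤ t * (φ y - φ p) - t * (1 - t) * (σ / 2 * ‖y - p‖ ^ 2) := by
      nlinarith [hmax, hsc]
    have ht0 : 0 < t := ht.1
    rw [hsplit]
    nlinarith [hcomb, ht0, mul_le_mul_of_nonneg_left (le_refl (0:ℝ)) (le_of_lt ht0)]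
  -- take the limit t → 0⁺
  have hlim : Tendsto (fun t : ℝ => ⟪z, y - p⟫ + σ / 2 * ‖y - p‖ ^ 2 - t * (σ / 2 * ‖y - p‖ ^ 2))
      (𝓝[>] (0:ℝ)) (𝓝 (⟪z, y - p⟫ + σ / 2 * ‖y - p‖ ^ 2)) := by
    have hc : Continuous (fun t : ℝ => ⟪z, y - p⟫ + σ / 2 * ‖y - p‖ ^ 2
        - t * (σ / 2 * ‖y - p‖ ^ 2)) := by continuity
    have h2 := (hc.tendsto 0).mono_left (nhdsWithin_le_nhds (s := Ioi (0:ℝ)))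
    simpa using h2
  have hev : ∀ᶠ t in 𝓝[>] (0:ℝ),
      ⟪z, y - p⟫ + σ / 2 * ‖y - p‖ ^ 2 - t * (σ / 2 * ‖y - p‖ ^ 2) ≤ φ y - φ p := by
    filter_upwards [Ioo_mem_nhdsGT_of_mem (by norm_num : (0:ℝ) ∈ Ico (0:ℝ) 1)] with t ht
    exact key t ht
  have := le_of_tendsto hlim hev
  linarith

lemma conj_bdd (φ : EuclideanSpace ℝ (Fin n) → ℝ) (σ : ℝ) (hσ : 0 < σ)
    (hφsc : StrongConvexOn Set.univ σ φ) (z : E) :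
    BddAbove (Set.range (fun y : E => ⟪z, y⟫ - φ y)) := by
  obtain ⟨p, hp⟩ := exists_argmax φ σ hσ hφsc z
  exact ⟨⟪z, p⟫ - φ p, by rintro v ⟨y, rfl⟩; exact hp y⟩

lemma conj_props (φ : EuclideanSpace ℝ (Fin n) → ℝ) (σ : ℝ) (hσ : 0 < σ)
    (hφsc : StrongConvexOn Set.univ σ φ) (z : E) :
    ∃ p : E, HasGradientAt (fenchelConj φ) p z ∧
      (∀ w : E, fenchelConj φ z + ⟪w - z, p⟫ ≤ fenchelConj φ w) ∧
      (∀ w : E, fenchelConj φ w ≤ fenchelConj φ z + ⟪w - z, p⟫ + 1 / (2 * σ) * ‖w - z‖ ^ 2) := by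
  obtain ⟨p, hp⟩ := exists_argmax φ σ hσ hφsc z
  have hval : fenchelConj φ z = ⟪z, p⟫ - φ p := by
    refine le_antisymm (ciSup_le hp) (le_ciSup (conj_bdd φ σ hσ hφsc z) p)
  have hlow : ∀ w : E, fenchelConj φ z + ⟪w - z, p⟫ ≤ fenchelConj φ w := by
    intro w
    have h1 : ⟪w, p⟫ - φ p ≤ fenchelConj φ w := le_ciSup (conj_bdd φ σ hσ hφsc w) p
    have h2 : ⟪w - z, p⟫ = ⟪w, p⟫ - ⟪z, p⟫ := inner_sub_left _ _ _
    rw [hval]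
    linarith
  have hupp : ∀ w : E, fenchelConj φ w ≤ fenchelConj φ z + ⟪w - z, p⟫ + 1 / (2 * σ) * ‖w - z‖ ^ 2 := by
    intro w
    refine ciSup_le fun y => ?_
    have hsg := argmax_subgrad φ σ hσ hφsc z p hp y
    have h1 : ⟪w - z, y - p⟫ ≤ ‖w - z‖ * ‖y - p‖ := real_inner_le_norm _ _
    have h2 : ‖w - z‖ * ‖y - p‖ ≤ σ / 2 * ‖y - p‖ ^ 2 + 1 / (2 * σ) * ‖w - z‖ ^ 2 := by
      rw [← sub_nonneg]
      have e : σ / 2 * ‖y - p‖ ^ 2 + 1 / (2 * σ) * ‖w - z‖ ^ 2 - ‖w - z‖ * ‖y - p‖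
          = (σ * ‖y - p‖ - ‖w - z‖) ^ 2 / (2 * σ) := by
        field_simp
        ring
      rw [e]
      positivity
    have h3 : ⟪w, y⟫ = ⟪w - z, y - p⟫ + ⟪w - z, p⟫ + ⟪z, y - p⟫ + ⟪z, p⟫ := by
      rw [inner_sub_left, inner_sub_left, inner_sub_right, inner_sub_right]
      ring
    rw [hval]
    linarith
  refine ⟨p, ?_, hlow, hupp⟩
  rw [hasGradientAt_iff_isLittleO, Asymptotics.isLittleO_iff]
  intro c hc
  have hball : Metric.ball z (2 * σ * c) ∈ 𝓝 z := Metric.ball_mem_nhds z (by positivity)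
  filter_upwards [hball] with w hw
  have hwz : ‖w - z‖ < 2 * σ * c := by rwa [Metric.mem_ball, dist_eq_norm] at hw
  have h1 : 0 ≤ fenchelConj φ w - fenchelConj φ z - ⟪p, w - z⟫ := by
    have := hlow w
    rw [real_inner_comm] at this
    linarith
  have h2 : fenchelConj φ w - fenchelConj φ z - ⟪p, w - z⟫ ≤ 1 / (2 * σ) * ‖w - z‖ ^ 2 := by
    have := hupp w
    rw [real_inner_comm p (w - z)] at this
    linarith
  rw [Real.norm_eq_abs, abs_of_nonneg h1]
  have h3 : 1 / (2 * σ) * ‖w - z‖ ^ 2 ≤ c * ‖w - z‖ := by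
    rw [one_div, inv_mul_eq_div, div_le_iff₀ (by positivity : (0:ℝ) < 2 * σ)]
    nlinarith [norm_nonneg (w - z), hwz]
  calc fenchelConj φ w - fenchelConj φ z - ⟪p, w - z⟫ ≤ 1 / (2 * σ) * ‖w - z‖ ^ 2 := h2
    _ ≤ c * ‖w - z‖ := h3

lemma step_aux (σ s κ a0 a1 G G' N P Q R D1 D2 IP : ℝ) (hσ : 0 < σ) (hs : 0 < s)
    (hκ : 0 ≤ κ) (hG : 0 ≤ G) (hG' : 0 ≤ G') (hN : 0 ≤ N)
    (hP : a1 + s / 2 * G ≤ P) (hQ : a1 - a0 + s / 2 * N ≤ Q)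
    (hR : R = (G + G' - N) / 2)
    (hIP : IP = P + (κ + 1) / 2 * Q + (κ + 1) * s / 2 * R)
    (hD : D2 ≤ D1 - (κ + 2) * σ * s / 2 * IP + (κ + 2) ^ 2 * σ * s ^ 2 / 8 * G) :
    (κ + 2) * (κ + 3) * σ * s / 4 * a1 + D2 ≤ (κ + 1) * (κ + 2) * σ * s / 4 * a0 + D1 := by
  have hη : (0:ℝ) ≤ (κ + 2) * σ * s / 2 := by positivity
  have h1 := mul_le_mul_of_nonneg_left hP hη
  have h2 := mul_le_mul_of_nonneg_left hQ
    (by positivity : (0:ℝ) ≤ (κ + 2) * σ * s / 2 * ((κ + 1) / 2))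
  have hIPeq : (κ + 2) * σ * s / 2 * IP
      = (κ + 2) * σ * s / 2 * P + ((κ + 2) * σ * s / 2 * ((κ + 1) / 2)) * Q
        + (κ + 2) * σ * s / 2 * ((κ + 1) * s / 4) * (G + G' - N) := by
    rw [hIP, hR]; ring
  have hx1 : (0:ℝ) ≤ (κ + 2) * σ * s ^ 2 / 8 * G := by positivity
  have hx2 : (0:ℝ) ≤ (κ + 1) * (κ + 2) * σ * s ^ 2 / 8 * G' := by positivity
  nlinarith [h1, h2, hIPeq, hx1, hx2, hD]

end AMDAux

/-- For unconstrained accelerated mirror descent with `0 < s ≤ 1/L`,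
`f(x_k) − f(x*) ≤ (2σs[f(x₀) − f(x*)] + 4D_{φ*}(z₁, z*))/((k+1)(k+2)σs)` for every `k ≥ 0`. -/
theorem accelerated_mirror_descent_function_value_rate
{n : ℕ} (f φ : EuclideanSpace ℝ (Fin n) → ℝ)
    (f' gφs : EuclideanSpace ℝ (Fin n) → EuclideanSpace ℝ (Fin n))
    (σ L s : ℝ) (hσ : 0 < σ)
    -- f is convex and differentiable with L-Lipschitz gradient
    (hfconv : ConvexOn ℝ Set.univ f)
    (hfd : ∀ x, HasGradientAt f (f' x) x)
    (hfL : ∀ x y, ‖f' x - f' y‖ ≤ L * ‖x - y‖)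
    -- φ is σ-strongly convex
    (hφsc : StrongConvexOn Set.univ σ φ)
    -- φ* is differentiable with gradient gφs
    (hgφs : ∀ z, HasGradientAt (fenchelConj φ) (gφs z) z)
    -- the unconstrained accelerated mirror descent iteration
    (x z : ℕ → EuclideanSpace ℝ (Fin n))
    (hz : ∀ k : ℕ, z (k + 1) = z k - ((((k : ℝ) + 1) * σ * s) / 2) • f' (x k))
    (hxz : ∀ k : ℕ, gφs (z (k + 1)) =
      (1 / 2 : ℝ) • ((((k : ℝ) + 3)) • x (k + 1) - (((k : ℝ) + 1)) • x k +
        ((((k : ℝ) + 1)) * s) • f' (x k)))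
    -- x* is a global minimizer of f and ∇φ*(z*) = x*
    (xs zs : EuclideanSpace ℝ (Fin n))
    (hxs : ∀ w, f xs ≤ f w) (hzs : gφs zs = xs)
    (hs : 0 < s) (hsL : s ≤ 1 / L) :
    ∀ k : ℕ,
      f (x k) - f xs ≤
        (2 * σ * s * (f (x 0) - f xs) +
            4 * (fenchelConj φ (z 1) - fenchelConj φ zs - ⟪gφs zs, z 1 - zs⟫)) /
          ((((k : ℝ) + 1) * ((k : ℝ) + 2)) * σ * s) := by
  have hL : 0 < L := by
    by_contra h
    push_neg at h
    have : 1 / L ≤ 0 := one_div_nonpos.mpr h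
    linarith
  have hsL2 : s / 2 ≤ 1 / (2 * L) := by
    have e : 1 / (2 * L) = (1 / L) / 2 := by
      field_simp
    rw [e]
    linarith
  have hgxs : f' xs = 0 := by
    have hmin : IsLocalMin f xs := Filter.Eventually.of_forall (fun w => hxs w)
    have h0 := hmin.hasFDerivAt_eq_zero (hfd xs).hasFDerivAt
    have h1 := congrArg (InnerProductSpace.toDual ℝ (EuclideanSpace ℝ (Fin n))).symm h0
    simpa using h1
  have conj : ∀ ζ : EuclideanSpace ℝ (Fin n),
      (∀ w, fenchelConj φ ζ + ⟪w - ζ, gφs ζ⟫ ≤ fenchelConj φ w) ∧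
      (∀ w, fenchelConj φ w ≤ fenchelConj φ ζ + ⟪w - ζ, gφs ζ⟫ + 1 / (2 * σ) * ‖w - ζ‖ ^ 2) := by
    intro ζ
    obtain ⟨p, hgrad, hlow, hupp⟩ := conj_props φ σ hσ hφsc ζ
    have hpe : gφs ζ = p := (hgφs ζ).unique hgrad
    rw [hpe]
    exact ⟨hlow, hupp⟩
  set D : ℕ → ℝ := fun k => fenchelConj φ (z k) - fenchelConj φ zs - ⟪xs, z k - zs⟫ with hD
  have hDnonneg : ∀ k : ℕ, 0 ≤ D k := by
    intro k
    have h := (conj zs).1 (z k)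
    rw [hzs] at h
    have e : ⟪z k - zs, xs⟫ = ⟪xs, z k - zs⟫ := real_inner_comm _ _
    simp only [hD]
    linarith
  have step : ∀ j : ℕ,
      ((j:ℝ) + 2) * ((j:ℝ) + 3) * σ * s / 4 * (f (x (j+1)) - f xs) + D (j+1+1)
      ≤ ((j:ℝ) + 1) * ((j:ℝ) + 2) * σ * s / 4 * (f (x j) - f xs) + D (j+1) := by
    intro j
    have hκ : (0:ℝ) ≤ (j:ℝ) := Nat.cast_nonneg j
    have hG : (0:ℝ) ≤ ‖f' (x (j+1))‖^2 := by positivity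
    have hG' : (0:ℝ) ≤ ‖f' (x j)‖^2 := by positivity
    have hN : (0:ℝ) ≤ ‖f' (x j) - f' (x (j+1))‖^2 := by positivity
    have hP : (f (x (j+1)) - f xs) + s/2 * ‖f' (x (j+1))‖^2 ≤ ⟪f' (x (j+1)), x (j+1) - xs⟫ := by
      have hco := cocoercivity f f' L hL hfconv hfd hfL (x (j+1)) xs
      rw [hgxs] at hco
      have e1 : ⟪f' (x (j+1)), xs - x (j+1)⟫ = -⟪f' (x (j+1)), x (j+1) - xs⟫ := by
        rw [← inner_neg_right, neg_sub]
      have e2 : ‖(0:EuclideanSpace ℝ (Fin n)) - f' (x (j+1))‖^2 = ‖f' (x (j+1))‖^2 := by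
        rw [zero_sub, norm_neg]
      rw [e1, e2] at hco
      have e3 : s/2 * ‖f' (x (j+1))‖^2 ≤ 1/(2*L) * ‖f' (x (j+1))‖^2 :=
        mul_le_mul_of_nonneg_right hsL2 hG
      linarith
    have hQ : (f (x (j+1)) - f xs) - (f (x j) - f xs) + s/2 * ‖f' (x j) - f' (x (j+1))‖^2
        ≤ ⟪f' (x (j+1)), x (j+1) - x j⟫ := by
      have hco := cocoercivity f f' L hL hfconv hfd hfL (x (j+1)) (x j)
      have e1 : ⟪f' (x (j+1)), x j - x (j+1)⟫ = -⟪f' (x (j+1)), x (j+1) - x j⟫ := by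
        rw [← inner_neg_right, neg_sub]
      rw [e1] at hco
      have e3 : s/2 * ‖f' (x j) - f' (x (j+1))‖^2 ≤ 1/(2*L) * ‖f' (x j) - f' (x (j+1))‖^2 :=
        mul_le_mul_of_nonneg_right hsL2 hN
      linarith
    have hR : ⟪f' (x (j+1)), f' (x j)⟫
        = (‖f' (x (j+1))‖^2 + ‖f' (x j)‖^2 - ‖f' (x j) - f' (x (j+1))‖^2)/2 := by
      have h1 := norm_sub_sq_real (f' (x j)) (f' (x (j+1)))
      have h2 : ⟪f' (x j), f' (x (j+1))⟫ = ⟪f' (x (j+1)), f' (x j)⟫ := real_inner_comm _ _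
      linarith
    have huv : gφs (z (j+1)) - xs = (x (j+1) - xs) + (((j:ℝ)+1)/2) • (x (j+1) - x j)
        + (((j:ℝ)+1)*s/2) • f' (x j) := by
      rw [hxz j]
      module
    have hIP : ⟪f' (x (j+1)), gφs (z (j+1)) - xs⟫
        = ⟪f' (x (j+1)), x (j+1) - xs⟫ + ((j:ℝ)+1)/2 * ⟪f' (x (j+1)), x (j+1) - x j⟫
          + ((j:ℝ)+1)*s/2 * ⟪f' (x (j+1)), f' (x j)⟫ := by
      rw [huv, inner_add_right, inner_add_right, real_inner_smul_right, real_inner_smul_right]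
    have hzd : z (j+1+1) - z (j+1) = -((((j:ℝ)+2)*σ*s/2) • f' (x (j+1))) := by
      rw [hz (j+1)]
      push_cast
      module
    have hconj := (conj (z (j+1))).2 (z (j+1+1))
    rw [hzd, inner_neg_left, real_inner_smul_left, norm_neg, norm_smul,
      Real.norm_eq_abs] at hconj
    have habs : |((j:ℝ)+2)*σ*s/2| = ((j:ℝ)+2)*σ*s/2 := abs_of_pos (by positivity)
    rw [habs] at hconj
    have e6 : 1/(2*σ) * (((j:ℝ)+2)*σ*s/2 * ‖f' (x (j+1))‖)^2
        = ((j:ℝ)+2)^2*σ*s^2/8 * ‖f' (x (j+1))‖^2 := by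
      field_simp
      ring
    have e7 : ⟪xs, z (j+1+1) - zs⟫ - ⟪xs, z (j+1) - zs⟫ = ⟪xs, z (j+1+1) - z (j+1)⟫ := by
      rw [inner_sub_right, inner_sub_right, inner_sub_right]
      ring
    have e8 : ⟪xs, z (j+1+1) - z (j+1)⟫ = -((((j:ℝ)+2)*σ*s/2) * ⟪xs, f' (x (j+1))⟫) := by
      rw [hzd, inner_neg_right, real_inner_smul_right]
    have e8b : ⟪xs, f' (x (j+1))⟫ = ⟪f' (x (j+1)), xs⟫ := real_inner_comm _ _
    have e9 : ⟪f' (x (j+1)), gφs (z (j+1)) - xs⟫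
        = ⟪f' (x (j+1)), gφs (z (j+1))⟫ - ⟪f' (x (j+1)), xs⟫ := inner_sub_right _ _ _
    have e8' : ⟪xs, z (j+1+1) - z (j+1)⟫
        = -(((j:ℝ)+2)*σ*s/2 * ⟪f' (x (j+1)), xs⟫) := by
      rw [e8, e8b]
    have e9' : ((j:ℝ)+2)*σ*s/2 * ⟪f' (x (j+1)), gφs (z (j+1)) - xs⟫
        = ((j:ℝ)+2)*σ*s/2 * ⟪f' (x (j+1)), gφs (z (j+1))⟫
          - ((j:ℝ)+2)*σ*s/2 * ⟪f' (x (j+1)), xs⟫ := by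
      rw [e9]
      ring
    have hD2 : D (j+1+1) ≤ D (j+1)
        - ((j:ℝ)+2)*σ*s/2 * ⟪f' (x (j+1)), gφs (z (j+1)) - xs⟫
        + ((j:ℝ)+2)^2*σ*s^2/8 * ‖f' (x (j+1))‖^2 := by
      simp only [hD]
      linarith [hconj, e6, e7, e8', e9']
    exact step_aux σ s (j:ℝ) (f (x j) - f xs) (f (x (j+1)) - f xs)
      (‖f' (x (j+1))‖^2) (‖f' (x j)‖^2) (‖f' (x j) - f' (x (j+1))‖^2)
      (⟪f' (x (j+1)), x (j+1) - xs⟫) (⟪f' (x (j+1)), x (j+1) - x j⟫)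
      (⟪f' (x (j+1)), f' (x j)⟫) (D (j+1)) (D (j+1+1))
      (⟪f' (x (j+1)), gφs (z (j+1)) - xs⟫)
      hσ hs hκ hG hG' hN hP hQ hR hIP hD2
  have chain : ∀ k : ℕ, ((k:ℝ) + 1) * ((k:ℝ) + 2) * σ * s / 4 * (f (x k) - f xs) + D (k + 1)
      ≤ σ * s / 2 * (f (x 0) - f xs) + D 1 := by
    intro k
    induction k with
    | zero =>
      norm_num
      linarith
    | succ j ih =>
      have hstep := step j
      push_cast
      push_cast at ih hstep
      linarith [hstep, ih]
  intro k
  have hden : 0 < (((k:ℝ) + 1) * ((k:ℝ) + 2)) * σ * s := by positivity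
  rw [le_div_iff₀ hden, hzs]
  have hch := chain k
  have hDk := hDnonneg (k + 1)
  simp only [hD] at hch hDk
  nlinarith [hch, hDk]
end
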